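/- arXiv:1405.0986 — 9 statements merged into one kernel-verified Lean document; each statement's English description precedes it below -/
import Mathlib

section
/- Let ρ be a separable bipartite density matrix on ℂ^{dA}⊗ℂ^{dB}, and let A₁, A₂ be dA×dA complex matrices and B₁, B₂ be dB×dB complex matrices. Then |Tr((A₁A₂ ⊗ B₁B₂)ρ)|² ≤ Re Tr((A₁A₁† ⊗ B₂†B₂)ρ) · Re Tr((A₂†A₂ ⊗ B₁B₁†)ρ). (Both traces on the right-hand side are nonnegative reals since the operators are positive semidefinite.) -/
open Matrix
open scoped Kronecker ComplexOrder

noncomputable section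

/-- A density matrix: a positive semidefinite complex matrix of trace 1. -/
def IsDensityMatrix {ι : Type*} [Fintype ι] (ρ : Matrix ι ι ℂ) : Prop :=
  ρ.PosSemidef ∧ ρ.trace = 1

/-- A bipartite state is separable if it is a finite convex combination of Kronecker
products of density matrices on the two factors. -/
def Separable {dA dB : ℕ}
    (ρ : Matrix (Fin dA × Fin dB) (Fin dA × Fin dB) ℂ) : Prop :=
  ∃ (n : ℕ) (p : Fin n → ℝ) (ρA : Fin n → Matrix (Fin dA) (Fin dA) ℂ)
    (ρB : Fin n → Matrix (Fin dB) (Fin dB) ℂ),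
    (∀ k, 0 ≤ p k) ∧ (∑ k, p k = 1) ∧
    (∀ k, IsDensityMatrix (ρA k)) ∧ (∀ k, IsDensityMatrix (ρB k)) ∧
    ρ = ∑ k, (p k : ℂ) • (ρA k ⊗ₖ ρB k)

private lemma psd_trace_nonneg {d : ℕ} {P : Matrix (Fin d) (Fin d) ℂ} (hP : P.PosSemidef) :
    0 ≤ P.trace := by
  rw [Matrix.trace]
  apply Finset.sum_nonneg
  intro i _
  exact hP.diag_nonneg

private lemma trace_mul_psd_nonneg {d : ℕ} {ρ P : Matrix (Fin d) (Fin d) ℂ}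
    (hρ : ρ.PosSemidef) (hP : P.PosSemidef) : 0 ≤ (P * ρ).trace := by
  open MatrixOrder in
  obtain ⟨S, rfl⟩ := CStarAlgebra.nonneg_iff_eq_star_mul_self.mp hρ.nonneg
  rw [star_eq_conjTranspose]
  have h : (P * (Sᴴ * S)).trace = (S * P * Sᴴ).trace := by
    rw [← Matrix.mul_assoc, Matrix.trace_mul_cycle]
  rw [h]
  exact psd_trace_nonneg (hP.mul_mul_conjTranspose_same S)

private lemma inner_eq_trace {d : ℕ} (P Q : Matrix (Fin d) (Fin d) ℂ) :
    (∑ p : Fin d × Fin d, (starRingEnd ℂ) (P p.1 p.2) * Q p.1 p.2) = (Pᴴ * Q).trace := by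
  rw [Matrix.trace]
  simp only [Matrix.diag_apply, Matrix.mul_apply, Matrix.conjTranspose_apply]
  rw [Fintype.sum_prod_type]
  exact Finset.sum_comm

private def mvec {d : ℕ} (P : Matrix (Fin d) (Fin d) ℂ) : EuclideanSpace ℂ (Fin d × Fin d) :=
  WithLp.toLp 2 (fun p : Fin d × Fin d => P p.1 p.2)

private lemma inner_mvec {d : ℕ} (P Q : Matrix (Fin d) (Fin d) ℂ) :
    (inner ℂ (mvec P) (mvec Q) : ℂ) = (Pᴴ * Q).trace := by
  rw [PiLp.inner_apply]
  simp only [RCLike.inner_apply, mvec, PiLp.toLp_apply]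
  rw [← inner_eq_trace]
  exact Finset.sum_congr rfl fun _ _ => mul_comm _ _

private lemma trace_cs {d : ℕ} {ρ : Matrix (Fin d) (Fin d) ℂ} (hρ : ρ.PosSemidef)
    (M N : Matrix (Fin d) (Fin d) ℂ) :
    ‖((M * N * ρ).trace)‖ ^ 2 ≤
      ((M * Mᴴ * ρ).trace).re * ((Nᴴ * N * ρ).trace).re := by
  open MatrixOrder in
  set S := CFC.sqrt ρ with hSdef
  open MatrixOrder in
  have hSS : S * S = ρ := CFC.sqrt_mul_sqrt_self ρ hρ.nonneg
  open MatrixOrder in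
  have hSH : Sᴴ = S := (CFC.sqrt_nonneg ρ).posSemidef.1
  set x : EuclideanSpace ℂ (Fin d × Fin d) := mvec (Mᴴ * S) with hx
  set y : EuclideanSpace ℂ (Fin d × Fin d) := mvec (N * S) with hy
  have tr3 : ∀ (P Q : Matrix (Fin d) (Fin d) ℂ), (S * P * (Q * S)).trace = (P * Q * ρ).trace := by
    intro P Q
    rw [← hSS, show S * P * (Q * S) = S * (P * Q) * S by noncomm_ring,
      Matrix.trace_mul_cycle, Matrix.trace_mul_comm]
  have hxy : (inner ℂ x y : ℂ) = (M * N * ρ).trace := by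
    rw [hx, hy, inner_mvec, Matrix.conjTranspose_mul, Matrix.conjTranspose_conjTranspose, hSH, tr3]
  have hxx : (inner ℂ x x : ℂ) = (M * Mᴴ * ρ).trace := by
    rw [hx, inner_mvec, Matrix.conjTranspose_mul, Matrix.conjTranspose_conjTranspose, hSH, tr3]
  have hyy : (inner ℂ y y : ℂ) = (Nᴴ * N * ρ).trace := by
    rw [hy, inner_mvec, Matrix.conjTranspose_mul, hSH, tr3]
  calc ‖((M * N * ρ).trace)‖ ^ 2 = ‖(inner ℂ x y : ℂ)‖ ^ 2 := by
        rw [hxy]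
    _ ≤ (‖x‖ * ‖y‖) ^ 2 := by
        apply pow_le_pow_left₀ (norm_nonneg _) (norm_inner_le_norm (𝕜 := ℂ) x y)
    _ = ((inner ℂ x x : ℂ)).re * ((inner ℂ y y : ℂ)).re := by
        rw [mul_pow]
        rw [← inner_self_eq_norm_sq (𝕜 := ℂ) x, ← inner_self_eq_norm_sq (𝕜 := ℂ) y]
        simp [RCLike.re_to_complex]
    _ = _ := by rw [hxx, hyy]

private lemma nonneg_parts {z : ℂ} (h : 0 ≤ z) : 0 ≤ z.re ∧ z.im = 0 := by
  rw [Complex.le_def] at h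
  exact ⟨by simpa using h.1, by simpa using h.2.symm⟩


/-- **The Cauchy–Schwarz separability criterion (Theorem 1).**
For every separable bipartite state `ρ`,
`|⟨A₁A₂ ⊗ B₁B₂⟩|² ≤ ⟨A₁A₁† ⊗ B₂†B₂⟩ ⟨A₂†A₂ ⊗ B₁B₁†⟩`. -/
theorem separable_cauchy_schwarz_criterion {dA dB : ℕ}
    (ρ : Matrix (Fin dA × Fin dB) (Fin dA × Fin dB) ℂ)
    (hρ : IsDensityMatrix ρ) (hsep : Separable ρ)
    (A₁ A₂ : Matrix (Fin dA) (Fin dA) ℂ) (B₁ B₂ : Matrix (Fin dB) (Fin dB) ℂ) :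
    ‖(((A₁ * A₂) ⊗ₖ (B₁ * B₂)) * ρ).trace‖ ^ 2 ≤
      ((((A₁ * A₁ᴴ) ⊗ₖ (B₂ᴴ * B₂)) * ρ).trace).re *
      ((((A₂ᴴ * A₂) ⊗ₖ (B₁ * B₁ᴴ)) * ρ).trace).re := by
  obtain ⟨n, p, ρA, ρB, hp0, hp1, hDA, hDB, hρeq⟩ := hsep
  have expand : ∀ (P : Matrix (Fin dA) (Fin dA) ℂ) (Q : Matrix (Fin dB) (Fin dB) ℂ),
      ((P ⊗ₖ Q) * ρ).trace = ∑ k, (p k : ℂ) * (((P * ρA k).trace) * ((Q * ρB k).trace)) := by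
    intro P Q
    rw [hρeq, Matrix.mul_sum, Matrix.trace_sum]
    refine Finset.sum_congr rfl fun k _ => ?_
    rw [Matrix.mul_smul, Matrix.trace_smul, ← Matrix.mul_kronecker_mul,
      Matrix.trace_kronecker, smul_eq_mul]
  -- nonnegativity / reality of the four traces
  have hA1 := fun k => nonneg_parts (trace_mul_psd_nonneg (hDA k).1
    (Matrix.posSemidef_self_mul_conjTranspose A₁))
  have hA2 := fun k => nonneg_parts (trace_mul_psd_nonneg (hDA k).1
    (Matrix.posSemidef_conjTranspose_mul_self A₂))
  have hB1 := fun k => nonneg_parts (trace_mul_psd_nonneg (hDB k).1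
    (Matrix.posSemidef_self_mul_conjTranspose B₁))
  have hB2 := fun k => nonneg_parts (trace_mul_psd_nonneg (hDB k).1
    (Matrix.posSemidef_conjTranspose_mul_self B₂))
  set a : Fin n → ℝ := fun k =>
    ((A₁ * A₁ᴴ * ρA k).trace).re * ((B₂ᴴ * B₂ * ρB k).trace).re with ha_def
  set b : Fin n → ℝ := fun k =>
    ((A₂ᴴ * A₂ * ρA k).trace).re * ((B₁ * B₁ᴴ * ρB k).trace).re with hb_def
  set c : Fin n → ℂ := fun k =>
    ((A₁ * A₂) * ρA k).trace * ((B₁ * B₂) * ρB k).trace with hc_def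
  have ha0 : ∀ k, 0 ≤ a k := fun k => mul_nonneg (hA1 k).1 (hB2 k).1
  have hb0 : ∀ k, 0 ≤ b k := fun k => mul_nonneg (hA2 k).1 (hB1 k).1
  -- rewrite the two RHS traces
  have hR1 : ((((A₁ * A₁ᴴ) ⊗ₖ (B₂ᴴ * B₂)) * ρ).trace).re = ∑ k, p k * a k := by
    rw [expand, Complex.re_sum]
    refine Finset.sum_congr rfl fun k _ => ?_
    simp [Complex.mul_re, (hA1 k).2, (hB2 k).2, ha_def]
  have hR2 : ((((A₂ᴴ * A₂) ⊗ₖ (B₁ * B₁ᴴ)) * ρ).trace).re = ∑ k, p k * b k := by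
    rw [expand, Complex.re_sum]
    refine Finset.sum_congr rfl fun k _ => ?_
    simp [Complex.mul_re, (hA2 k).2, (hB1 k).2, hb_def]
  -- pointwise Cauchy-Schwarz
  have hcs : ∀ k, ‖(c k)‖ ≤ Real.sqrt (a k * b k) := by
    intro k
    have h1 := trace_cs (hDA k).1 A₁ A₂
    have h2 := trace_cs (hDB k).1 B₁ B₂
    have hsq : ‖(c k)‖ ^ 2 ≤ a k * b k := by
      rw [hc_def]
      simp only [norm_mul, mul_pow]
      calc ‖(((A₁ * A₂) * ρA k).trace)‖ ^ 2 *
            ‖(((B₁ * B₂) * ρB k).trace)‖ ^ 2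
          ≤ (((A₁ * A₁ᴴ * ρA k).trace).re * ((A₂ᴴ * A₂ * ρA k).trace).re) *
            (((B₁ * B₁ᴴ * ρB k).trace).re * ((B₂ᴴ * B₂ * ρB k).trace).re) := by
            apply mul_le_mul h1 h2 (sq_nonneg _)
            exact mul_nonneg (hA1 k).1 (hA2 k).1
        _ = a k * b k := by rw [ha_def, hb_def]; ring
    calc ‖(c k)‖ = Real.sqrt (‖(c k)‖ ^ 2) :=
          (Real.sqrt_sq (norm_nonneg _)).symm
      _ ≤ Real.sqrt (a k * b k) := Real.sqrt_le_sqrt hsq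
  -- triangle inequality for the LHS
  have htr : ‖((((A₁ * A₂) ⊗ₖ (B₁ * B₂)) * ρ).trace)‖ ≤
      ∑ k, p k * Real.sqrt (a k * b k) := by
    rw [expand]
    refine le_trans (norm_sum_le _ _) ?_
    refine Finset.sum_le_sum fun k _ => ?_
    rw [norm_mul, Complex.norm_real, Real.norm_eq_abs, abs_of_nonneg (hp0 k)]
    exact mul_le_mul_of_nonneg_left (hcs k) (hp0 k)
  rw [hR1, hR2]
  calc ‖((((A₁ * A₂) ⊗ₖ (B₁ * B₂)) * ρ).trace)‖ ^ 2
      ≤ (∑ k, p k * Real.sqrt (a k * b k)) ^ 2 :=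
        pow_le_pow_left₀ (norm_nonneg _) htr 2
    _ ≤ (∑ k, p k * a k) * ∑ k, p k * b k := by
        apply Finset.sum_sq_le_sum_mul_sum_of_sq_eq_mul
        · exact fun k _ => mul_nonneg (hp0 k) (ha0 k)
        · exact fun k _ => mul_nonneg (hp0 k) (hb0 k)
        · intro k _
          rw [mul_pow, Real.sq_sqrt (mul_nonneg (ha0 k) (hb0 k))]
          ring
end
end

section
/- Let ρ be a separable bipartite density matrix on ℂ^{dA}⊗ℂ^{dB}, and let a, α ∈ ℂ^{dA} and b, β ∈ ℂ^{dB} be arbitrary vectors. Then |⟨α⊗β, ρ(a⊗b)⟩|² ≤ Re⟨a⊗β, ρ(a⊗β)⟩ · Re⟨α⊗b, ρ(α⊗b)⟩, where ⟨·,·⟩ is the standard inner product on ℂ^{dA·dB} (conjugate-linear in the first argument) and u⊗v denotes the Kronecker product of vectors. -/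
open Matrix
open scoped Kronecker ComplexOrder

noncomputable section

/-- The Kronecker product of two vectors: `(u ⊗ v)_{(i,j)} = uᵢ vⱼ`. -/
def vecKron {dA dB : ℕ} (u : Fin dA → ℂ) (v : Fin dB → ℂ) : Fin dA × Fin dB → ℂ :=
  fun i => u i.1 * v i.2

/-- Cauchy–Schwarz inequality for a positive semidefinite matrix. -/
lemma psd_cauchy_schwarz {n : Type*} [Fintype n] [DecidableEq n] {M : Matrix n n ℂ}
    (hM : M.PosSemidef) (x y : n → ℂ) :
    ‖star y ⬝ᵥ (M *ᵥ x)‖ ^ 2 ≤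
      (star x ⬝ᵥ (M *ᵥ x)).re * (star y ⬝ᵥ (M *ᵥ y)).re := by
  obtain ⟨B, rfl⟩ := by open scoped MatrixOrder in exact CStarAlgebra.nonneg_iff_eq_star_mul_self.mp hM.nonneg
  simp only [star_eq_conjTranspose]
  have key : ∀ u v : n → ℂ, star v ⬝ᵥ ((Bᴴ * B) *ᵥ u) =
      (inner ℂ ((WithLp.equiv 2 (n → ℂ)).symm (B *ᵥ v))
        ((WithLp.equiv 2 (n → ℂ)).symm (B *ᵥ u)) : ℂ) := by
    intro u v
    rw [← Matrix.mulVec_mulVec, dotProduct_mulVec, ← Matrix.star_mulVec]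
    simp [dotProduct, PiLp.inner_apply, RCLike.inner_apply, mul_comm]
  rw [key, key, key]
  have h1 := norm_inner_le_norm (𝕜 := ℂ) ((WithLp.equiv 2 (n → ℂ)).symm (B *ᵥ y))
    ((WithLp.equiv 2 (n → ℂ)).symm (B *ᵥ x))
  have h2 : ∀ u : EuclideanSpace ℂ n, (inner ℂ u u : ℂ).re = ‖u‖ ^ 2 := fun u => by
    simpa using inner_self_eq_norm_sq (𝕜 := ℂ) u
  rw [h2, h2]
  calc ‖_‖ ^ 2
      ≤ (‖(WithLp.equiv 2 (n → ℂ)).symm (B *ᵥ y)‖ *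
          ‖(WithLp.equiv 2 (n → ℂ)).symm (B *ᵥ x)‖) ^ 2 :=
        pow_le_pow_left₀ (norm_nonneg _) h1 2
    _ = _ := by ring

lemma kron_mulVec {dA dB : ℕ} (A : Matrix (Fin dA) (Fin dA) ℂ) (B : Matrix (Fin dB) (Fin dB) ℂ)
    (u : Fin dA → ℂ) (v : Fin dB → ℂ) :
    (A ⊗ₖ B) *ᵥ vecKron u v = vecKron (A *ᵥ u) (B *ᵥ v) := by
  funext i
  simp only [Matrix.mulVec, dotProduct, vecKron, Matrix.kroneckerMap_apply,
    Fintype.sum_prod_type, Finset.sum_mul_sum]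
  apply Finset.sum_congr rfl; intro k _
  apply Finset.sum_congr rfl; intro l _
  ring

lemma vecKron_dot {dA dB : ℕ} (u w : Fin dA → ℂ) (v z : Fin dB → ℂ) :
    star (vecKron u v) ⬝ᵥ vecKron w z = (star u ⬝ᵥ w) * (star v ⬝ᵥ z) := by
  simp only [dotProduct, vecKron, Pi.star_apply, star_mul',
    Fintype.sum_prod_type, Finset.sum_mul_sum]
  apply Finset.sum_congr rfl; intro k _
  apply Finset.sum_congr rfl; intro l _
  ring

/-- The quadratic form of a PSD matrix is a nonnegative real. -/
lemma psd_form_real {n : Type*} [Fintype n] {M : Matrix n n ℂ} (hM : M.PosSemidef)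
    (x : n → ℂ) :
    star x ⬝ᵥ (M *ᵥ x) = ((star x ⬝ᵥ (M *ᵥ x)).re : ℂ) ∧ 0 ≤ (star x ⬝ᵥ (M *ᵥ x)).re := by
  have h := hM.dotProduct_mulVec_nonneg x
  rw [Complex.le_def] at h
  simp only [Complex.zero_re, Complex.zero_im] at h
  exact ⟨Complex.ext rfl (by simp [← h.2]), h.1⟩

/-- **The optimal form of the Cauchy–Schwarz separability criterion (Eq. (21)).**
For every separable bipartite state `ρ` and all vectors `a, α, b, β`:
`|⟨α⊗β|ρ|a⊗b⟩|² ≤ ⟨a⊗β|ρ|a⊗β⟩ ⟨α⊗b|ρ|α⊗b⟩`. -/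
theorem separable_vector_criterion {dA dB : ℕ}
    (ρ : Matrix (Fin dA × Fin dB) (Fin dA × Fin dB) ℂ)
    (hρ : IsDensityMatrix ρ) (hsep : Separable ρ)
    (a α : Fin dA → ℂ) (b β : Fin dB → ℂ) :
    ‖star (vecKron α β) ⬝ᵥ (ρ *ᵥ vecKron a b)‖ ^ 2 ≤
      (star (vecKron a β) ⬝ᵥ (ρ *ᵥ vecKron a β)).re *
      (star (vecKron α b) ⬝ᵥ (ρ *ᵥ vecKron α b)).re := by
  obtain ⟨n, p, ρA, ρB, hp, hpsum, hA, hB, hrep⟩ := hsep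
  subst hrep
  -- expand the quadratic/bilinear forms
  have expand : ∀ (u u' : Fin dA → ℂ) (v v' : Fin dB → ℂ),
      star (vecKron u v) ⬝ᵥ ((∑ k, (p k : ℂ) • (ρA k ⊗ₖ ρB k)) *ᵥ vecKron u' v')
        = ∑ k, (p k : ℂ) * ((star u ⬝ᵥ (ρA k *ᵥ u')) * (star v ⬝ᵥ (ρB k *ᵥ v'))) := by
    intro u u' v v'
    have hsum : (∑ k, (p k : ℂ) • (ρA k ⊗ₖ ρB k)) *ᵥ vecKron u' v'
        = ∑ k, ((p k : ℂ) • (ρA k ⊗ₖ ρB k)) *ᵥ vecKron u' v' := by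
      funext i
      simp only [Matrix.mulVec, dotProduct, Matrix.sum_apply, Finset.sum_apply, Finset.sum_mul]
      rw [Finset.sum_comm]
    have hdot : star (vecKron u v) ⬝ᵥ (∑ k, ((p k : ℂ) • (ρA k ⊗ₖ ρB k)) *ᵥ vecKron u' v')
        = ∑ k, star (vecKron u v) ⬝ᵥ (((p k : ℂ) • (ρA k ⊗ₖ ρB k)) *ᵥ vecKron u' v') := by
      simp only [dotProduct, Finset.sum_apply, Finset.mul_sum]
      rw [Finset.sum_comm]
    rw [hsum, hdot]
    apply Finset.sum_congr rfl; intro k _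
    rw [Matrix.smul_mulVec, dotProduct_smul, smul_eq_mul, kron_mulVec, vecKron_dot]
  -- real quantities
  set Aa : Fin n → ℝ := fun k => (star a ⬝ᵥ (ρA k *ᵥ a)).re with hAa
  set Aα : Fin n → ℝ := fun k => (star α ⬝ᵥ (ρA k *ᵥ α)).re with hAα
  set Bb : Fin n → ℝ := fun k => (star b ⬝ᵥ (ρB k *ᵥ b)).re with hBb
  set Bβ : Fin n → ℝ := fun k => (star β ⬝ᵥ (ρB k *ᵥ β)).re with hBβ
  have hAa0 : ∀ k, 0 ≤ Aa k := fun k => (psd_form_real (hA k).1 a).2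
  have hAα0 : ∀ k, 0 ≤ Aα k := fun k => (psd_form_real (hA k).1 α).2
  have hBb0 : ∀ k, 0 ≤ Bb k := fun k => (psd_form_real (hB k).1 b).2
  have hBβ0 : ∀ k, 0 ≤ Bβ k := fun k => (psd_form_real (hB k).1 β).2
  -- RHS values
  have hrhs1 : (star (vecKron a β) ⬝ᵥ ((∑ k, (p k : ℂ) • (ρA k ⊗ₖ ρB k)) *ᵥ
      vecKron a β)).re = ∑ k, p k * (Aa k * Bβ k) := by
    rw [expand]
    rw [Complex.re_sum]
    apply Finset.sum_congr rfl; intro k _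
    rw [(psd_form_real (hA k).1 a).1, (psd_form_real (hB k).1 β).1]
    simp [Aa, Bβ]
  have hrhs2 : (star (vecKron α b) ⬝ᵥ ((∑ k, (p k : ℂ) • (ρA k ⊗ₖ ρB k)) *ᵥ
      vecKron α b)).re = ∑ k, p k * (Aα k * Bb k) := by
    rw [expand]
    rw [Complex.re_sum]
    apply Finset.sum_congr rfl; intro k _
    rw [(psd_form_real (hA k).1 α).1, (psd_form_real (hB k).1 b).1]
    simp [Aα, Bb]
  rw [hrhs1, hrhs2, expand]
  -- per-term Cauchy-Schwarz
  have hxk : ∀ k, ‖star α ⬝ᵥ (ρA k *ᵥ a)‖ ≤ Real.sqrt (Aa k * Aα k) := by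
    intro k
    have := psd_cauchy_schwarz (hA k).1 a α
    calc ‖star α ⬝ᵥ (ρA k *ᵥ a)‖
        = Real.sqrt (‖star α ⬝ᵥ (ρA k *ᵥ a)‖ ^ 2) :=
          (Real.sqrt_sq (norm_nonneg _)).symm
      _ ≤ Real.sqrt (Aa k * Aα k) := Real.sqrt_le_sqrt this
  have hyk : ∀ k, ‖star β ⬝ᵥ (ρB k *ᵥ b)‖ ≤ Real.sqrt (Bb k * Bβ k) := by
    intro k
    have := psd_cauchy_schwarz (hB k).1 b β
    calc ‖star β ⬝ᵥ (ρB k *ᵥ b)‖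
        = Real.sqrt (‖star β ⬝ᵥ (ρB k *ᵥ b)‖ ^ 2) :=
          (Real.sqrt_sq (norm_nonneg _)).symm
      _ ≤ Real.sqrt (Bb k * Bβ k) := Real.sqrt_le_sqrt this
  set r : Fin n → ℝ := fun k => p k * (Real.sqrt (Aa k * Aα k) * Real.sqrt (Bb k * Bβ k))
    with hr
  have hr0 : ∀ k, 0 ≤ r k := fun k =>
    mul_nonneg (hp k) (mul_nonneg (Real.sqrt_nonneg _) (Real.sqrt_nonneg _))
  have step1 : ‖∑ k, (p k : ℂ) *
      ((star α ⬝ᵥ (ρA k *ᵥ a)) * (star β ⬝ᵥ (ρB k *ᵥ b)))‖ ≤ ∑ k, r k := by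
    refine (norm_sum_le _ _).trans (Finset.sum_le_sum fun k _ => ?_)
    rw [norm_mul, norm_mul, Complex.norm_real, Real.norm_eq_abs, abs_of_nonneg (hp k)]
    exact mul_le_mul_of_nonneg_left
      (mul_le_mul (hxk k) (hyk k) (norm_nonneg _) (Real.sqrt_nonneg _)) (hp k)
  have step2 : (∑ k, r k) ^ 2 ≤ (∑ k, p k * (Aa k * Bβ k)) * ∑ k, p k * (Aα k * Bb k) := by
    apply Finset.sum_sq_le_sum_mul_sum_of_sq_eq_mul
    · intro k _
      exact mul_nonneg (hp k) (mul_nonneg (hAa0 k) (hBβ0 k))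
    · intro k _
      exact mul_nonneg (hp k) (mul_nonneg (hAα0 k) (hBb0 k))
    · intro k _
      have h1 : Real.sqrt (Aa k * Aα k) ^ 2 = Aa k * Aα k :=
        Real.sq_sqrt (mul_nonneg (hAa0 k) (hAα0 k))
      have h2 : Real.sqrt (Bb k * Bβ k) ^ 2 = Bb k * Bβ k :=
        Real.sq_sqrt (mul_nonneg (hBb0 k) (hBβ0 k))
      simp only [hr]
      have : (p k * (Real.sqrt (Aa k * Aα k) * Real.sqrt (Bb k * Bβ k))) ^ 2
          = p k ^ 2 * (Real.sqrt (Aa k * Aα k) ^ 2 * Real.sqrt (Bb k * Bβ k) ^ 2) := by ring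
      rw [this, h1, h2]; ring
  calc ‖∑ k, (p k : ℂ) *
        ((star α ⬝ᵥ (ρA k *ᵥ a)) * (star β ⬝ᵥ (ρB k *ᵥ b)))‖ ^ 2
      ≤ (∑ k, r k) ^ 2 := pow_le_pow_left₀ (norm_nonneg _) step1 2
    _ ≤ _ := step2
end
end

section
/- Let ρ be a bipartite density matrix on ℂ^{dA}⊗ℂ^{dB} whose partial transpose ρ^{T_A} is positive semidefinite (i.e., ρ is a PPT state). Then for all dA×dA complex matrices A₁, A₂ and all dB×dB complex matrices B₁, B₂ one has |Tr((A₁A₂ ⊗ B₁B₂)ρ)|² ≤ Re Tr((A₁A₁† ⊗ B₂†B₂)ρ) · Re Tr((A₂†A₂ ⊗ B₁B₁†)ρ). In particular, no PPT state can violate the separability criterion of this form. -/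
open Matrix
open scoped Kronecker ComplexOrder

noncomputable section

/-- The partial transpose with respect to the first subsystem:
`(ρ^{T_A})_{(i,j),(k,l)} = ρ_{(k,j),(i,l)}`. -/
def partialTransposeA {dA dB : ℕ}
    (ρ : Matrix (Fin dA × Fin dB) (Fin dA × Fin dB) ℂ) :
    Matrix (Fin dA × Fin dB) (Fin dA × Fin dB) ℂ :=
  Matrix.of fun x y => ρ (y.1, x.2) (x.1, y.2)

/-- Moving the partial transpose from the state to the observable:
`Tr((X ⊗ Y) ρ) = Tr((Xᵀ ⊗ Y) ρ^{T_A})`. -/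
lemma trace_kron_partialTransposeA {dA dB : ℕ}
    (ρ : Matrix (Fin dA × Fin dB) (Fin dA × Fin dB) ℂ)
    (X : Matrix (Fin dA) (Fin dA) ℂ) (Y : Matrix (Fin dB) (Fin dB) ℂ) :
    ((X ⊗ₖ Y) * ρ).trace = ((Xᵀ ⊗ₖ Y) * partialTransposeA ρ).trace := by
  simp only [Matrix.trace, Matrix.diag, Matrix.mul_apply, kroneckerMap_apply,
    partialTransposeA, of_apply, transpose_apply, Fintype.sum_prod_type]
  conv_lhs => enter [2, i1]; rw [Finset.sum_comm]
  rw [Finset.sum_comm]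
  conv_rhs => enter [2, i1]; rw [Finset.sum_comm]

/-- Cauchy–Schwarz for the positive semidefinite sesquilinear form
`(M, N) ↦ Tr(Mᴴ N τ)` attached to a PSD matrix `τ`. -/
lemma trace_cauchy_schwarz {n : Type*} [Fintype n] [DecidableEq n]
    (τ : Matrix n n ℂ) (hτ : τ.PosSemidef) (M N : Matrix n n ℂ) :
    ‖(Mᴴ * N * τ).trace‖ ^ 2 ≤
      ((Mᴴ * M * τ).trace).re * ((Nᴴ * N * τ).trace).re := by
  obtain ⟨S, rfl⟩ : ∃ S : Matrix n n ℂ, τ = Sᴴ * S := by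
    open scoped MatrixOrder in
    have h0 : 0 ≤ τ := Matrix.nonneg_iff_posSemidef.mpr hτ
    open scoped MatrixOrder in
    exact ⟨CFC.sqrt τ, by
      rw [show (CFC.sqrt τ)ᴴ = CFC.sqrt τ from (CFC.sqrt_nonneg τ).isSelfAdjoint.star_eq,
        CFC.sqrt_mul_sqrt_self τ h0]⟩
  have key : ∀ P Q : Matrix n n ℂ, (Pᴴ * Q * (Sᴴ * S)).trace
      = ((P * Sᴴ)ᴴ * (Q * Sᴴ)).trace := by
    intro P Q
    rw [show Pᴴ * Q * (Sᴴ * S) = (Pᴴ * Q * Sᴴ) * S by noncomm_ring,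
      Matrix.trace_mul_comm, Matrix.conjTranspose_mul,
      Matrix.conjTranspose_conjTranspose]
    simp [Matrix.mul_assoc]
  rw [key M N, key M M, key N N]
  set X := M * Sᴴ with hX
  set Y := N * Sᴴ with hY
  set e : Matrix n n ℂ → EuclideanSpace ℂ (n × n) := fun A => WithLp.toLp 2 (fun p : n × n => A p.1 p.2) with he
  have hinner : ∀ A B : Matrix n n ℂ, (inner ℂ (e A) (e B) : ℂ) = (Aᴴ * B).trace := by
    intro A B
    simp only [PiLp.inner_apply, PiLp.toLp_apply, RCLike.inner_apply, he, Matrix.trace, Matrix.diag,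
      Matrix.mul_apply, Matrix.conjTranspose_apply, Fintype.sum_prod_type]
    exact Finset.sum_comm.trans (Finset.sum_congr rfl fun i _ => Finset.sum_congr rfl fun j _ => mul_comm _ _)
  have h := inner_mul_inner_self_le (𝕜 := ℂ) (e X) (e Y)
  rw [hinner X Y, hinner X X, hinner Y Y] at h
  have hyx : (inner ℂ (e Y) (e X) : ℂ) = starRingEnd ℂ ((Xᴴ * Y).trace) := by
    rw [← hinner X Y, inner_conj_symm]
  rw [hyx] at h
  simpa [sq, Complex.norm_conj, RCLike.re_to_complex] using h

/-- Conjugate transpose of a Kronecker product. -/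
lemma kron_conjTranspose {m n p q : Type*} [Fintype m] [Fintype n] [Fintype p] [Fintype q]
    (X : Matrix m n ℂ) (Y : Matrix p q ℂ) : (X ⊗ₖ Y)ᴴ = Xᴴ ⊗ₖ Yᴴ := by
  ext ⟨i, j⟩ ⟨k, l⟩
  simp [Matrix.conjTranspose_apply, kroneckerMap_apply, star_mul']

/-- Conjugate transpose commutes with transpose. -/
lemma conjT_transpose {m n : Type*} (A : Matrix m n ℂ) : (Aᵀ)ᴴ = (Aᴴ)ᵀ := by
  ext i j
  simp [Matrix.conjTranspose_apply, Matrix.transpose_apply]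

/-- **PPT states satisfy the Cauchy–Schwarz separability criterion (Theorem 3).**
If the partial transpose of a bipartite density matrix `ρ` is positive semidefinite,
then `|⟨A₁A₂ ⊗ B₁B₂⟩|² ≤ ⟨A₁A₁† ⊗ B₂†B₂⟩ ⟨A₂†A₂ ⊗ B₁B₁†⟩`;
hence only NPT states can be detected by this criterion. -/
theorem ppt_satisfies_cauchy_schwarz_criterion {dA dB : ℕ}
    (ρ : Matrix (Fin dA × Fin dB) (Fin dA × Fin dB) ℂ)
    (hρ : IsDensityMatrix ρ) (hppt : (partialTransposeA ρ).PosSemidef)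
    (A₁ A₂ : Matrix (Fin dA) (Fin dA) ℂ) (B₁ B₂ : Matrix (Fin dB) (Fin dB) ℂ) :
    ‖(((A₁ * A₂) ⊗ₖ (B₁ * B₂)) * ρ).trace‖ ^ 2 ≤
      ((((A₁ * A₁ᴴ) ⊗ₖ (B₂ᴴ * B₂)) * ρ).trace).re *
      ((((A₂ᴴ * A₂) ⊗ₖ (B₁ * B₁ᴴ)) * ρ).trace).re := by
  set τ := partialTransposeA ρ with hτdef
  set M : Matrix (Fin dA × Fin dB) (Fin dA × Fin dB) ℂ := (A₂ᵀ ⊗ₖ B₁)ᴴ with hM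
  set N : Matrix (Fin dA × Fin dB) (Fin dA × Fin dB) ℂ := A₁ᵀ ⊗ₖ B₂ with hN
  have hMN : Mᴴ * N = (A₁ * A₂)ᵀ ⊗ₖ (B₁ * B₂) := by
    rw [hM, Matrix.conjTranspose_conjTranspose, hN, Matrix.transpose_mul,
      ← Matrix.mul_kronecker_mul]
  have hMM : Mᴴ * M = (A₂ᴴ * A₂)ᵀ ⊗ₖ (B₁ * B₁ᴴ) := by
    rw [hM, Matrix.conjTranspose_conjTranspose, kron_conjTranspose, conjT_transpose,
      Matrix.transpose_mul, ← Matrix.mul_kronecker_mul]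
  have hNN : Nᴴ * N = (A₁ * A₁ᴴ)ᵀ ⊗ₖ (B₂ᴴ * B₂) := by
    rw [hN, kron_conjTranspose, conjT_transpose, Matrix.transpose_mul,
      ← Matrix.mul_kronecker_mul]
  have h := trace_cauchy_schwarz τ hppt M N
  rw [hMN, hMM, hNN] at h
  rw [← trace_kron_partialTransposeA ρ (A₁ * A₂) (B₁ * B₂),
    ← trace_kron_partialTransposeA ρ (A₂ᴴ * A₂) (B₁ * B₁ᴴ),
    ← trace_kron_partialTransposeA ρ (A₁ * A₁ᴴ) (B₂ᴴ * B₂)] at h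
  linarith [h]
end
end

section
/- Let ρ be a bipartite density matrix on ℂ^{dA}⊗ℂ^{dB} and let (v_j, λ_j) be an orthonormal eigenbasis of the Hermitian matrix ρ^{T_A} with real eigenvalues λ_j. Suppose there exist vectors a₁, a₂ ∈ ℂ^{dA}, b₁, b₂ ∈ ℂ^{dB} and nonzero real constants c⁺ > 0 > c⁻ such that ⟨a₂⊗b₁, v_j⟩ = c⁺ ⟨a₁⊗b₂, v_j⟩ for every eigenvector v_j with λ_j > 0 and ⟨a₂⊗b₁, v_j⟩ = c⁻ ⟨a₁⊗b₂, v_j⟩ for every eigenvector v_j with λ_j < 0. Assume moreover S⁺ := ∑_{j: λ_j>0} λ_j |⟨v_j, a₁⊗b₂⟩|² > 0 and S⁻ := ∑_{j: λ_j<0} |λ_j| |⟨v_j, a₁⊗b₂⟩|² > 0. Then Re⟨a₂⊗b₁, ρ^{T_A}(a₂⊗b₁)⟩ · Re⟨a₁⊗b₂, ρ^{T_A}(a₁⊗b₂)⟩ < |⟨a₁⊗b₂, ρ^{T_A}(a₂⊗b₁)⟩|², i.e., the Cauchy–Schwarz-type separability bound is strictly violated, so ρ is entangled. -/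
open Matrix
open scoped ComplexOrder

noncomputable section

/-- **Lemma 4.**  If there are product vectors `a₁⊗b₂`, `a₂⊗b₁` whose overlaps with the
eigenvectors of `ρ^{T_A}` corresponding to positive (resp. negative) eigenvalues are
proportional with constants `c⁺ > 0 > c⁻`, and both the positive and the negative parts
contribute, then the Cauchy–Schwarz separability bound is strictly violated, i.e. `ρ` is
entangled. -/
theorem violation_from_eigenvector_overlaps {dA dB : ℕ}
    (ρ : Matrix (Fin dA × Fin dB) (Fin dA × Fin dB) ℂ)
    (hρ : IsDensityMatrix ρ)
    (v : Fin (dA * dB) → (Fin dA × Fin dB → ℂ)) (μ : Fin (dA * dB) → ℝ)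
    (horth : ∀ i j, star (v i) ⬝ᵥ v j = if i = j then 1 else 0)
    (heig : ∀ j, partialTransposeA ρ *ᵥ v j = (μ j : ℂ) • v j)
    (a₁ a₂ : Fin dA → ℂ) (b₁ b₂ : Fin dB → ℂ) (cp cm : ℝ)
    (hcp : 0 < cp) (hcm : cm < 0)
    (hplus : ∀ j, 0 < μ j →
      star (vecKron a₂ b₁) ⬝ᵥ v j = (cp : ℂ) * (star (vecKron a₁ b₂) ⬝ᵥ v j))
    (hminus : ∀ j, μ j < 0 →
      star (vecKron a₂ b₁) ⬝ᵥ v j = (cm : ℂ) * (star (vecKron a₁ b₂) ⬝ᵥ v j))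
    (hSplus : 0 < ∑ j ∈ Finset.univ.filter (fun j => 0 < μ j),
      μ j * ‖star (v j) ⬝ᵥ vecKron a₁ b₂‖ ^ 2)
    (hSminus : 0 < ∑ j ∈ Finset.univ.filter (fun j => μ j < 0),
      |μ j| * ‖star (v j) ⬝ᵥ vecKron a₁ b₂‖ ^ 2) :
    (star (vecKron a₂ b₁) ⬝ᵥ (partialTransposeA ρ *ᵥ vecKron a₂ b₁)).re *
      (star (vecKron a₁ b₂) ⬝ᵥ (partialTransposeA ρ *ᵥ vecKron a₁ b₂)).re <
    ‖star (vecKron a₁ b₂) ⬝ᵥ (partialTransposeA ρ *ᵥ vecKron a₂ b₁)‖ ^ 2 := by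
  classical
  set x₁ := vecKron a₁ b₂ with hx₁
  set x₂ := vecKron a₂ b₁ with hx₂
  set M := partialTransposeA ρ with hMdef
  set A : Fin (dA*dB) → ℂ := fun j => star (v j) ⬝ᵥ x₁ with hA
  set B : Fin (dA*dB) → ℂ := fun j => star (v j) ⬝ᵥ x₂ with hB
  have hA' : ∀ j, star (v j) ⬝ᵥ x₁ = A j := fun j => rfl
  have hB' : ∀ j, star (v j) ⬝ᵥ x₂ = B j := fun j => rfl
  simp only [hA'] at hSplus hSminus
  set Sp := ∑ j ∈ Finset.univ.filter (fun j => 0 < μ j), μ j * ‖A j‖ ^ 2 with hSp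
  set Sm := ∑ j ∈ Finset.univ.filter (fun j => μ j < 0), |μ j| * ‖A j‖ ^ 2 with hSm
  have hsw : ∀ (w x : Fin dA × Fin dB → ℂ), star x ⬝ᵥ w = star (star w ⬝ᵥ x) := by
    intro w x
    simp only [dotProduct, star_sum, Pi.star_apply]
    refine Finset.sum_congr rfl fun q _ => ?_
    rw [star_mul', star_star, mul_comm]
  have hBp : ∀ j, 0 < μ j → B j = (cp : ℂ) * A j := by
    intro j hj
    have h := hplus j hj
    rw [hsw (v j) x₂, hsw (v j) x₁, hB', hA'] at h
    have h2 := congrArg star h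
    simpa [mul_comm] using h2
  have hBm : ∀ j, μ j < 0 → B j = (cm : ℂ) * A j := by
    intro j hj
    have h := hminus j hj
    rw [hsw (v j) x₂, hsw (v j) x₁, hB', hA'] at h
    have h2 := congrArg star h
    simpa [mul_comm] using h2
  have hcomp : ∀ p q, (∑ j, v j p * star (v j q)) = if p = q then (1:ℂ) else 0 := by
    set e := finProdFinEquiv (m := dA) (n := dB) with he
    set W : Matrix (Fin (dA*dB)) (Fin (dA*dB)) ℂ := Matrix.of fun i j => v j (e.symm i) with hW
    have h1 : Wᴴ * W = 1 := by
      ext i j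
      have h := horth i j
      simp only [dotProduct, Pi.star_apply] at h
      simp only [Matrix.mul_apply, Matrix.conjTranspose_apply, hW, Matrix.of_apply,
        Matrix.one_apply]
      rw [← h]
      exact Equiv.sum_comp e.symm fun p => star (v i p) * v j p
    have h2 : W * Wᴴ = 1 := mul_eq_one_comm.mp h1
    intro p q
    have h3 : (W * Wᴴ) (e p) (e q) = (1 : Matrix (Fin (dA*dB)) (Fin (dA*dB)) ℂ) (e p) (e q) := by
      rw [h2]
    simpa [Matrix.mul_apply, Matrix.conjTranspose_apply, hW, Matrix.one_apply,
      Equiv.symm_apply_apply, e.injective.eq_iff] using h3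
  have hcomp' : ∀ p q, (∑ j, v j p * (starRingEnd ℂ) (v j q)) = if p = q then (1:ℂ) else 0 :=
    hcomp
  have hexp : ∀ x y : Fin dA × Fin dB → ℂ,
      star x ⬝ᵥ (M *ᵥ y) = ∑ j, (μ j : ℂ) * (star (star (v j) ⬝ᵥ x) * (star (v j) ⬝ᵥ y)) := by
    intro x y
    have hy : y = ∑ j, (star (v j) ⬝ᵥ y) • v j := by
      funext p
      rw [Finset.sum_apply]
      simp only [Pi.smul_apply, smul_eq_mul]
      have hterm : ∀ j, (star (v j) ⬝ᵥ y) * v j p = ∑ q, (v j p * star (v j q)) * y q := by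
        intro j
        rw [dotProduct, Finset.sum_mul]
        refine Finset.sum_congr rfl fun q _ => ?_
        simp only [Pi.star_apply]
        ring
      rw [Finset.sum_congr rfl fun j _ => hterm j, Finset.sum_comm]
      simp [← Finset.sum_mul, hcomp']
    have hMy : M *ᵥ y = ∑ j, ((star (v j) ⬝ᵥ y) * (μ j : ℂ)) • v j := by
      conv_lhs => rw [hy]
      rw [← Matrix.mulVecLin_apply, map_sum]
      refine Finset.sum_congr rfl fun j _ => ?_
      rw [LinearMap.map_smul, Matrix.mulVecLin_apply, heig j, smul_smul]
    have hds : ∀ (u : Fin dA × Fin dB → ℂ) (f : Fin (dA*dB) → Fin dA × Fin dB → ℂ),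
        u ⬝ᵥ (∑ j, f j) = ∑ j, u ⬝ᵥ f j := by
      intro u f
      simp only [dotProduct, Finset.sum_apply, Finset.mul_sum]
      exact Finset.sum_comm
    rw [hMy, hds]
    refine Finset.sum_congr rfl fun j _ => ?_
    rw [dotProduct_smul, hsw (v j) x]
    simp only [smul_eq_mul]
    ring
  have hzero : ∀ (g : Fin (dA*dB) → ℂ), (∀ j, μ j = 0 → g j = 0) →
      ∑ j, g j = (∑ j ∈ Finset.univ.filter (fun j => 0 < μ j), g j)
        + ∑ j ∈ Finset.univ.filter (fun j => μ j < 0), g j := by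
    intro g hg
    rw [← Finset.sum_filter_add_sum_filter_not Finset.univ (fun j => 0 < μ j) g]
    congr 1
    rw [← Finset.sum_filter_add_sum_filter_not (Finset.univ.filter fun j => ¬ 0 < μ j)
      (fun j => μ j < 0) g]
    have h0 : ∑ j ∈ (Finset.univ.filter fun j => ¬ 0 < μ j).filter (fun j => ¬ μ j < 0), g j
        = 0 := by
      refine Finset.sum_eq_zero fun j hj => ?_
      simp only [Finset.mem_filter, Finset.mem_univ, true_and, not_lt] at hj
      exact hg j (le_antisymm hj.1 hj.2)
    rw [h0, add_zero, Finset.filter_filter]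
    refine Finset.sum_congr (Finset.filter_congr fun j _ => ?_) fun _ _ => rfl
    constructor
    · exact fun h => h.2
    · exact fun h => ⟨not_lt.mpr h.le, h⟩
  have hstc : ∀ (r : ℝ) (z : ℂ), star ((r:ℂ) * z) = (r:ℂ) * star z := by
    intro r z
    simp [Complex.star_def, Complex.conj_ofReal]
  have hcz : ∀ z : ℂ, star z * z = ((‖z‖ ^ 2 : ℝ) : ℂ) := fun z => by
    rw [Complex.sq_norm, mul_comm, show star z = (starRingEnd ℂ) z from rfl, Complex.mul_conj]
  have h11 : star x₁ ⬝ᵥ (M *ᵥ x₁) = ((Sp - Sm : ℝ) : ℂ) := by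
    rw [hexp x₁ x₁]
    simp only [hA']
    rw [hzero (fun j => (μ j : ℂ) * (star (A j) * A j)) (fun j hj => by simp [hj])]
    have hpos : ∑ j ∈ Finset.univ.filter (fun j => 0 < μ j), (μ j : ℂ) * (star (A j) * A j)
        = ((Sp : ℝ) : ℂ) := by
      rw [hSp, Complex.ofReal_sum]
      refine Finset.sum_congr rfl fun j hj => ?_
      rw [hcz]
      push_cast
      ring
    have hneg : ∑ j ∈ Finset.univ.filter (fun j => μ j < 0), (μ j : ℂ) * (star (A j) * A j)
        = -((Sm : ℝ) : ℂ) := by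
      rw [hSm, Complex.ofReal_sum, ← Finset.sum_neg_distrib]
      refine Finset.sum_congr rfl fun j hj => ?_
      simp only [Finset.mem_filter, Finset.mem_univ, true_and] at hj
      rw [hcz, abs_of_neg hj]
      push_cast
      ring
    rw [hpos, hneg]
    push_cast
    ring
  have h22 : star x₂ ⬝ᵥ (M *ᵥ x₂) = ((cp^2 * Sp - cm^2 * Sm : ℝ) : ℂ) := by
    rw [hexp x₂ x₂]
    simp only [hB']
    rw [hzero (fun j => (μ j : ℂ) * (star (B j) * B j)) (fun j hj => by simp [hj])]
    have hpos : ∑ j ∈ Finset.univ.filter (fun j => 0 < μ j), (μ j : ℂ) * (star (B j) * B j)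
        = ((cp^2 * Sp : ℝ) : ℂ) := by
      rw [hSp]
      push_cast
      rw [Finset.mul_sum]
      refine Finset.sum_congr rfl fun j hj => ?_
      simp only [Finset.mem_filter, Finset.mem_univ, true_and] at hj
      rw [hBp j hj, hstc cp (A j),
        show ((cp:ℂ) * star (A j)) * ((cp:ℂ) * A j) = (cp:ℂ)^2 * (star (A j) * A j) from by ring,
        hcz]
      push_cast
      ring
    have hneg : ∑ j ∈ Finset.univ.filter (fun j => μ j < 0), (μ j : ℂ) * (star (B j) * B j)
        = -((cm^2 * Sm : ℝ) : ℂ) := by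
      rw [hSm]
      push_cast
      rw [Finset.mul_sum, ← Finset.sum_neg_distrib]
      refine Finset.sum_congr rfl fun j hj => ?_
      simp only [Finset.mem_filter, Finset.mem_univ, true_and] at hj
      rw [hBm j hj, hstc cm (A j),
        show ((cm:ℂ) * star (A j)) * ((cm:ℂ) * A j) = (cm:ℂ)^2 * (star (A j) * A j) from by ring,
        hcz, abs_of_neg hj]
      push_cast
      ring
    rw [hpos, hneg]
    push_cast
    ring
  have h12 : star x₁ ⬝ᵥ (M *ᵥ x₂) = ((cp * Sp - cm * Sm : ℝ) : ℂ) := by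
    rw [hexp x₁ x₂]
    simp only [hA', hB']
    rw [hzero (fun j => (μ j : ℂ) * (star (A j) * B j)) (fun j hj => by simp [hj])]
    have hpos : ∑ j ∈ Finset.univ.filter (fun j => 0 < μ j), (μ j : ℂ) * (star (A j) * B j)
        = ((cp * Sp : ℝ) : ℂ) := by
      rw [hSp]
      push_cast
      rw [Finset.mul_sum]
      refine Finset.sum_congr rfl fun j hj => ?_
      simp only [Finset.mem_filter, Finset.mem_univ, true_and] at hj
      rw [hBp j hj, show star (A j) * ((cp:ℂ) * A j) = (cp:ℂ) * (star (A j) * A j) from by ring,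
        hcz]
      push_cast
      ring
    have hneg : ∑ j ∈ Finset.univ.filter (fun j => μ j < 0), (μ j : ℂ) * (star (A j) * B j)
        = -((cm * Sm : ℝ) : ℂ) := by
      rw [hSm]
      push_cast
      rw [Finset.mul_sum, ← Finset.sum_neg_distrib]
      refine Finset.sum_congr rfl fun j hj => ?_
      simp only [Finset.mem_filter, Finset.mem_univ, true_and] at hj
      rw [hBm j hj, show star (A j) * ((cm:ℂ) * A j) = (cm:ℂ) * (star (A j) * A j) from by ring,
        hcz, abs_of_neg hj]
      push_cast
      ring
    rw [hpos, hneg]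
    push_cast
    ring
  rw [h11, h22, h12, Complex.ofReal_re, Complex.ofReal_re, Complex.norm_real, Real.norm_eq_abs, sq_abs]
  have hd : 0 < cp - cm := by linarith
  nlinarith [mul_pos (mul_pos hSplus hSminus) (mul_pos hd hd)]
end
end

section
/- Let ψ ∈ ℂ^d⊗ℂ^d be a unit vector, let 0 ≤ p ≤ 1, set D = d², and consider the state ρ_wn = p |ψ⟩⟨ψ| + ((1−p)/D)·𝟙_D on ℂ^d⊗ℂ^d. If the partial transpose ρ_wn^{T_A} has a negative eigenvalue (i.e., ρ_wn is NPT), then there exist vectors a, α ∈ ℂ^d and b, β ∈ ℂ^d such that Re⟨a⊗β, ρ_wn(a⊗β)⟩ · Re⟨α⊗b, ρ_wn(α⊗b)⟩ < |⟨α⊗β, ρ_wn(a⊗b)⟩|², i.e., ρ_wn violates the Cauchy–Schwarz separability criterion. -/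
open Matrix
open scoped ComplexOrder

noncomputable section

namespace WNaux

variable {d : ℕ}

lemma star_vecKron (x : Fin d → ℂ) (y : Fin d → ℂ) :
    star (vecKron x y) = vecKron (star x) (star y) := by
  funext i
  simp [vecKron, Pi.star_apply, mul_comm]

lemma kron_dot_kron (x y x' y' : Fin d → ℂ) :
    star (vecKron x y) ⬝ᵥ vecKron x' y' = (star x ⬝ᵥ x') * (star y ⬝ᵥ y') := by
  rw [show (star x ⬝ᵥ x') * (star y ⬝ᵥ y')
      = ∑ k, ∑ l, (star x k * x' k) * (star y l * y' l) from Finset.sum_mul_sum _ _ _ _]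
  rw [dotProduct, Fintype.sum_prod_type]
  refine Finset.sum_congr rfl fun k _ => Finset.sum_congr rfl fun l _ => ?_
  simp [vecKron]
  ring

lemma vecMulVec_mulVec' (a : Fin d × Fin d → ℂ) (c : Fin d × Fin d → ℂ) (v : Fin d × Fin d → ℂ) :
    vecMulVec a c *ᵥ v = (c ⬝ᵥ v) • a := by
  funext i
  simp [mulVec, vecMulVec, dotProduct, Finset.mul_sum, mul_comm, mul_assoc, mul_left_comm]

def Psi (ψ : Fin d × Fin d → ℂ) : Matrix (Fin d) (Fin d) ℂ := Matrix.of fun i j => ψ (i, j)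

lemma hermPsi (ψ : Fin d × Fin d → ℂ) : (Psi ψ * (Psi ψ)ᴴ).IsHermitian :=
  isHermitian_mul_conjTranspose_self _

def uu (ψ : Fin d × Fin d → ℂ) : Fin d → Fin d → ℂ := fun m => ⇑((hermPsi ψ).eigenvectorBasis m)

def sg (ψ : Fin d × Fin d → ℂ) : Fin d → ℝ := (hermPsi ψ).eigenvalues

def rr (ψ : Fin d × Fin d → ℂ) : Fin d → Fin d → ℂ :=
  fun m j => ∑ k, (starRingEnd ℂ) (uu ψ m k) * ψ (k, j)

lemma sg_nonneg (ψ : Fin d × Fin d → ℂ) (m : Fin d) : 0 ≤ sg ψ m :=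
  (posSemidef_self_mul_conjTranspose (Psi ψ)).eigenvalues_nonneg m

lemma uu_orthonormal (ψ : Fin d × Fin d → ℂ) (m n : Fin d) :
    (∑ k, (starRingEnd ℂ) (uu ψ m k) * uu ψ n k) = if m = n then 1 else 0 := by
  have h := (hermPsi ψ).eigenvectorBasis.orthonormal
  rw [orthonormal_iff_ite] at h
  simpa [PiLp.inner_apply, RCLike.inner_apply, uu, mul_comm] using h m n

lemma uu_complete (ψ : Fin d × Fin d → ℂ) (k k' : Fin d) :
    (∑ m, uu ψ m k * (starRingEnd ℂ) (uu ψ m k')) = if k = k' then 1 else 0 := by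
  have h1 : ((hermPsi ψ).eigenvectorUnitary : Matrix (Fin d) (Fin d) ℂ) *
      star ((hermPsi ψ).eigenvectorUnitary : Matrix (Fin d) (Fin d) ℂ) = 1 :=
    mem_unitaryGroup_iff.mp ((hermPsi ψ).eigenvectorUnitary).2
  have h2 := congrFun (congrFun h1 k) k'
  simpa [Matrix.mul_apply, Matrix.star_apply, Matrix.one_apply, uu] using h2

lemma psi_decomp (ψ : Fin d × Fin d → ℂ) (k : Fin d) (j : Fin d) :
    ψ (k, j) = ∑ m, uu ψ m k * rr ψ m j := by
  symm
  calc ∑ m, uu ψ m k * rr ψ m j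
      = ∑ m, ∑ k', uu ψ m k * ((starRingEnd ℂ) (uu ψ m k') * ψ (k', j)) := by
        simp only [rr, Finset.mul_sum]
    _ = ∑ k', ∑ m, uu ψ m k * ((starRingEnd ℂ) (uu ψ m k') * ψ (k', j)) := Finset.sum_comm
    _ = ∑ k', (∑ m, uu ψ m k * (starRingEnd ℂ) (uu ψ m k')) * ψ (k', j) := by
        refine Finset.sum_congr rfl fun k' _ => ?_
        rw [Finset.sum_mul]
        exact Finset.sum_congr rfl fun m _ => by ring
    _ = ∑ k', (if k = k' then 1 else 0) * ψ (k', j) := by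
        simp only [uu_complete]
    _ = ψ (k, j) := by simp

lemma rr_orth (ψ : Fin d × Fin d → ℂ) (m n : Fin d) :
    (∑ j, (starRingEnd ℂ) (rr ψ m j) * rr ψ n j) = if m = n then ((sg ψ m : ℝ) : ℂ) else 0 := by
  have hΨ : ∀ i j, Psi ψ i j = ψ (i, j) := fun i j => rfl
  have huu := uu_orthonormal ψ
  have hmv : ∀ m, (Psi ψ * (Psi ψ)ᴴ) *ᵥ uu ψ m = sg ψ m • uu ψ m :=
    fun m => (hermPsi ψ).mulVec_eigenvectorBasis m
  have hrdef : ∀ m j, rr ψ m j = ∑ k, (starRingEnd ℂ) (uu ψ m k) * ψ (k, j) := fun m j => rfl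
  set Ψ := Psi ψ
  set u := uu ψ
  set σ := sg ψ
  set r := rr ψ
  have hconj : ∀ j, (starRingEnd ℂ) (r m j) = ∑ k, u m k * (starRingEnd ℂ) (ψ (k, j)) := by
    intro j
    rw [hrdef]
    rw [map_sum]
    exact Finset.sum_congr rfl fun k _ => by simp
  have hRu : ∀ l, (∑ k, (Ψ * Ψᴴ) l k * u m k) = (σ m : ℂ) * u m l := by
    intro l
    have h := congrFun (hmv m) l
    simpa [Matrix.mulVec, dotProduct, Pi.smul_apply, Complex.real_smul] using h
  calc (∑ j, (starRingEnd ℂ) (r m j) * r n j)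
      = ∑ j, ∑ k, ∑ l, (u m k * (starRingEnd ℂ) (ψ (k, j))) *
          ((starRingEnd ℂ) (u n l) * ψ (l, j)) := by
        refine Finset.sum_congr rfl fun j _ => ?_
        rw [hconj, hrdef]
        rw [Finset.sum_mul_sum]
    _ = ∑ k, ∑ l, ∑ j, (u m k * (starRingEnd ℂ) (ψ (k, j))) *
          ((starRingEnd ℂ) (u n l) * ψ (l, j)) := by
        rw [Finset.sum_comm]
        exact Finset.sum_congr rfl fun k _ => Finset.sum_comm
    _ = ∑ k, ∑ l, (u m k * (starRingEnd ℂ) (u n l)) * (Ψ * Ψᴴ) l k := by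
        refine Finset.sum_congr rfl fun k _ => Finset.sum_congr rfl fun l _ => ?_
        rw [Matrix.mul_apply]
        rw [Finset.mul_sum]
        refine Finset.sum_congr rfl fun j _ => ?_
        rw [Matrix.conjTranspose_apply]
        rw [hΨ, hΨ]
        simp only [Complex.star_def]
        ring
    _ = ∑ l, (starRingEnd ℂ) (u n l) * ((σ m : ℂ) * u m l) := by
        rw [Finset.sum_comm]
        refine Finset.sum_congr rfl fun l _ => ?_
        rw [← hRu l, Finset.mul_sum]
        refine Finset.sum_congr rfl fun k _ => by ring
    _ = (σ m : ℂ) * ∑ l, (starRingEnd ℂ) (u n l) * u m l := by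
        rw [Finset.mul_sum]
        exact Finset.sum_congr rfl fun l _ => by ring
    _ = if m = n then ((σ m : ℝ) : ℂ) else 0 := by
        rw [huu n m]
        by_cases h : m = n <;> simp [h, eq_comm]

lemma rr_zero (ψ : Fin d × Fin d → ℂ) (n : Fin d) (hn : sg ψ n = 0) : rr ψ n = 0 := by
  have h := rr_orth ψ n n
  rw [if_pos rfl, hn] at h
  have h2 : ∑ j, Complex.normSq (rr ψ n j) = 0 := by
    have h3 := congrArg Complex.re h
    rw [Complex.re_sum] at h3
    simpa [Complex.normSq_eq_conj_mul_self, Complex.normSq_apply] using h3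
  funext j
  have h4 := (Finset.sum_eq_zero_iff_of_nonneg
    (fun i _ => Complex.normSq_nonneg (rr ψ n i))).mp h2 j (Finset.mem_univ j)
  exact Complex.normSq_eq_zero.mp h4

lemma dot_sum {I κ : Type*} [Fintype I] (v : I → ℂ) (s : Finset κ) (f : κ → I → ℂ) :
    v ⬝ᵥ (∑ k ∈ s, f k) = ∑ k ∈ s, v ⬝ᵥ f k := by
  simp only [dotProduct, Finset.sum_apply, Finset.mul_sum]
  rw [Finset.sum_comm]

lemma sum_mulVec' {I κ : Type*} [Fintype I] (s : Finset κ) (M : κ → Matrix I I ℂ) (v : I → ℂ) :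
    (∑ k ∈ s, M k) *ᵥ v = ∑ k ∈ s, M k *ᵥ v := by
  funext i
  simp only [Matrix.mulVec, dotProduct, Matrix.sum_apply, Finset.sum_apply, Finset.sum_mul]
  rw [Finset.sum_comm]

/-- the coefficients of `v` in the (unnormalized) Schmidt product frame. -/
def DD (ψ : Fin d × Fin d → ℂ) (v : Fin d × Fin d → ℂ) (m n : Fin d) : ℂ :=
  ∑ k, ∑ l, uu ψ m k * (starRingEnd ℂ) (rr ψ n l) * v (k, l)

lemma A_decomp (ψ : Fin d × Fin d → ℂ) :
    partialTransposeA (vecMulVec ψ (star ψ)) =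
      ∑ m, ∑ n, vecMulVec (vecKron (star (uu ψ n)) (rr ψ m))
        (star (vecKron (star (uu ψ m)) (rr ψ n))) := by
  ext x y
  have h1 : ψ (y.1, x.2) = ∑ m, uu ψ m y.1 * rr ψ m x.2 := psi_decomp ψ y.1 x.2
  have h2 : (starRingEnd ℂ) (ψ (x.1, y.2))
      = ∑ n, (starRingEnd ℂ) (uu ψ n x.1) * (starRingEnd ℂ) (rr ψ n y.2) := by
    rw [psi_decomp ψ x.1 y.2, map_sum]
    exact Finset.sum_congr rfl fun n _ => by rw [_root_.map_mul]
  calc partialTransposeA (vecMulVec ψ (star ψ)) x y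
      = ψ (y.1, x.2) * (starRingEnd ℂ) (ψ (x.1, y.2)) := by
        simp [partialTransposeA, vecMulVec_apply, Pi.star_apply, Complex.star_def]
    _ = ∑ m, ∑ n, (uu ψ m y.1 * rr ψ m x.2) *
          ((starRingEnd ℂ) (uu ψ n x.1) * (starRingEnd ℂ) (rr ψ n y.2)) := by
        rw [h1, h2, Finset.sum_mul_sum]
    _ = (∑ m, ∑ n, vecMulVec (vecKron (star (uu ψ n)) (rr ψ m))
        (star (vecKron (star (uu ψ m)) (rr ψ n)))) x y := by
        simp only [Matrix.sum_apply, vecMulVec_apply, vecKron, Pi.star_apply,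
          Complex.star_def, _root_.map_mul, Complex.conj_conj]
        refine Finset.sum_congr rfl fun m _ => Finset.sum_congr rfl fun n _ => by ring

lemma Q_eq (ψ v : Fin d × Fin d → ℂ) :
    star v ⬝ᵥ (partialTransposeA (vecMulVec ψ (star ψ)) *ᵥ v) =
      ∑ m, ∑ n, (starRingEnd ℂ) (DD ψ v n m) * DD ψ v m n := by
  rw [A_decomp, sum_mulVec', dot_sum]
  refine Finset.sum_congr rfl fun m _ => ?_
  rw [sum_mulVec', dot_sum]
  refine Finset.sum_congr rfl fun n _ => ?_
  rw [vecMulVec_mulVec', dotProduct_smul, smul_eq_mul]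
  have hdot1 : star (vecKron (star (uu ψ m)) (rr ψ n)) ⬝ᵥ v = DD ψ v m n := by
    rw [dotProduct, Fintype.sum_prod_type]
    refine Finset.sum_congr rfl fun k _ => Finset.sum_congr rfl fun l _ => ?_
    simp only [Pi.star_apply, vecKron, Complex.star_def, _root_.map_mul, Complex.conj_conj, DD]
    try ring
  have hdot2 : star v ⬝ᵥ vecKron (star (uu ψ n)) (rr ψ m) = (starRingEnd ℂ) (DD ψ v n m) := by
    rw [DD, map_sum]
    rw [dotProduct, Fintype.sum_prod_type]
    refine Finset.sum_congr rfl fun k _ => ?_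
    rw [map_sum]
    refine Finset.sum_congr rfl fun l _ => ?_
    simp only [Pi.star_apply, vecKron, Complex.star_def, _root_.map_mul, Complex.conj_conj]
    ring
  rw [hdot1, hdot2, mul_comm]

def ww (ψ : Fin d × Fin d → ℂ) (n : Fin d) (j : Fin d) : ℂ :=
  ((Real.sqrt (sg ψ n))⁻¹ : ℝ) * rr ψ n j

def CC (ψ v : Fin d × Fin d → ℂ) (m n : Fin d) : ℂ :=
  ∑ k, ∑ l, uu ψ m k * (starRingEnd ℂ) (ww ψ n l) * v (k, l)

lemma ww_zero (ψ : Fin d × Fin d → ℂ) (n : Fin d) (hn : sg ψ n = 0) : ∀ j, ww ψ n j = 0 := by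
  intro j
  simp [ww, rr_zero ψ n hn]

lemma DD_zero (ψ v : Fin d × Fin d → ℂ) (m n : Fin d) (hn : sg ψ n = 0) : DD ψ v m n = 0 := by
  simp [DD, rr_zero ψ n hn]

lemma CC_zero (ψ v : Fin d × Fin d → ℂ) (m n : Fin d) (hn : sg ψ n = 0) : CC ψ v m n = 0 := by
  simp [CC, ww_zero ψ n hn]

lemma DD_eq (ψ v : Fin d × Fin d → ℂ) (m n : Fin d) (hn : 0 < sg ψ n) :
    DD ψ v m n = (Real.sqrt (sg ψ n) : ℂ) * CC ψ v m n := by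
  have hs : (Real.sqrt (sg ψ n) : ℂ) ≠ 0 := by
    simp only [ne_eq, Complex.ofReal_eq_zero]
    positivity
  rw [CC, Finset.mul_sum]
  rw [DD]
  refine Finset.sum_congr rfl fun k _ => ?_
  rw [Finset.mul_sum]
  refine Finset.sum_congr rfl fun l _ => ?_
  simp only [ww, _root_.map_mul, Complex.conj_ofReal]
  rw [Complex.ofReal_inv]
  field_simp

lemma ww_orth (ψ : Fin d × Fin d → ℂ) (n n' : Fin d) (hn : 0 < sg ψ n) (hn' : 0 < sg ψ n') :
    (∑ l, (starRingEnd ℂ) (ww ψ n l) * ww ψ n' l) = if n = n' then 1 else 0 := by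
  have : (∑ l, (starRingEnd ℂ) (ww ψ n l) * ww ψ n' l)
      = ((Real.sqrt (sg ψ n))⁻¹ : ℂ) * ((Real.sqrt (sg ψ n'))⁻¹ : ℂ) *
        ∑ l, (starRingEnd ℂ) (rr ψ n l) * rr ψ n' l := by
    rw [Finset.mul_sum]
    refine Finset.sum_congr rfl fun l _ => ?_
    simp only [ww, _root_.map_mul, Complex.conj_ofReal, Complex.ofReal_inv, map_inv₀]
    ring
  rw [this, rr_orth]
  by_cases h : n = n'
  · subst h
    have hs : Real.sqrt (sg ψ n) ≠ 0 := by positivity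
    have hss : Real.sqrt (sg ψ n) * Real.sqrt (sg ψ n) = sg ψ n :=
      Real.mul_self_sqrt (le_of_lt hn)
    simp only [if_pos rfl, ← Complex.ofReal_inv, ← Complex.ofReal_mul, Complex.ofReal_eq_one]
    field_simp
    rw [if_pos trivial, if_pos trivial, Real.sq_sqrt hn.le, ← Complex.ofReal_mul, one_div,
      inv_mul_cancel₀ hn.ne', Complex.ofReal_one]
  · simp [h]

lemma bessel (ψ v : Fin d × Fin d → ℂ) :
    ∑ m, ∑ n, ‖CC ψ v m n‖ ^ 2 ≤ ∑ i, Complex.normSq (v i) := by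
  classical
  let vE : EuclideanSpace ℂ (Fin d × Fin d) := WithLp.toLp 2 v
  set F : Fin d × {n : Fin d // 0 < sg ψ n} → EuclideanSpace ℂ (Fin d × Fin d) :=
    fun q => WithLp.toLp 2 (fun kl : Fin d × Fin d => (starRingEnd ℂ) (uu ψ q.1 kl.1) * ww ψ q.2.1 kl.2) with hF
  have horth : Orthonormal ℂ F := by
    rw [orthonormal_iff_ite]
    rintro ⟨m, n, hn⟩ ⟨m', n', hn'⟩
    have : inner ℂ (F (m, ⟨n, hn⟩)) (F (m', ⟨n', hn'⟩))
        = (∑ k, uu ψ m k * (starRingEnd ℂ) (uu ψ m' k)) *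
          (∑ l, (starRingEnd ℂ) (ww ψ n l) * ww ψ n' l) := by
      rw [PiLp.inner_apply]
      rw [Finset.sum_mul_sum]
      rw [Fintype.sum_prod_type]
      refine Finset.sum_congr rfl fun k _ => Finset.sum_congr rfl fun l _ => ?_
      simp only [hF, RCLike.inner_apply, _root_.map_mul, Complex.conj_conj, PiLp.toLp_apply,
        WithLp.ofLp_toLp]
      ring
    rw [this]
    have h1 : (∑ k, uu ψ m k * (starRingEnd ℂ) (uu ψ m' k))
        = if m = m' then 1 else 0 := by
      have h0 := uu_orthonormal ψ m m'
      calc (∑ k, uu ψ m k * (starRingEnd ℂ) (uu ψ m' k))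
          = (starRingEnd ℂ) (∑ k, (starRingEnd ℂ) (uu ψ m k) * uu ψ m' k) := by
            rw [map_sum]
            exact Finset.sum_congr rfl fun k _ => by
              simp only [_root_.map_mul, Complex.conj_conj]; try ring
        _ = if m = m' then 1 else 0 := by
            rw [h0]; by_cases h : m = m' <;> simp [h]
    rw [h1, ww_orth ψ n n' hn hn']
    by_cases h1 : m = m' <;> by_cases h2 : n = n' <;>
      simp [h1, h2, Prod.ext_iff, Subtype.ext_iff]
  have hb := horth.sum_inner_products_le (s := Finset.univ) vE
  have hinner : ∀ (q : Fin d × {n : Fin d // 0 < sg ψ n}),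
      inner ℂ (F q) vE = CC ψ v q.1 q.2.1 := by
    intro q
    rw [PiLp.inner_apply, CC, Fintype.sum_prod_type]
    refine Finset.sum_congr rfl fun k _ => Finset.sum_congr rfl fun l _ => ?_
    simp only [hF, RCLike.inner_apply, _root_.map_mul, Complex.conj_conj, PiLp.toLp_apply,
      WithLp.ofLp_toLp, vE]
    try ring
  have hnorm : ‖vE‖ ^ 2 = ∑ i, Complex.normSq (v i) := by
    rw [EuclideanSpace.norm_eq]
    rw [Real.sq_sqrt (by positivity)]
    refine Finset.sum_congr rfl fun i _ => ?_
    rw [show ‖vE i‖ = ‖v i‖ from rfl]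
    exact Complex.sq_norm (v i)
  calc ∑ m, ∑ n, ‖CC ψ v m n‖ ^ 2
      = ∑ m, ∑ n ∈ Finset.univ.filter (fun n => 0 < sg ψ n),
          ‖CC ψ v m n‖ ^ 2 := by
        refine Finset.sum_congr rfl fun m _ => ?_
        symm
        refine Finset.sum_filter_of_ne fun n _ hne => ?_
        rcases lt_or_eq_of_le (sg_nonneg ψ n) with h | h
        · exact h
        · exact absurd (by rw [CC_zero ψ v m n h.symm]; simp) hne
    _ = ∑ q : Fin d × {n : Fin d // 0 < sg ψ n}, ‖inner ℂ (F q) vE‖ ^ 2 := by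
        rw [Fintype.sum_prod_type]
        refine Finset.sum_congr rfl fun m _ => ?_
        rw [Finset.sum_subtype (p := fun n => 0 < sg ψ n)
          (Finset.univ.filter fun n => 0 < sg ψ n)
          (fun x => by simp) (fun n => ‖CC ψ v m n‖ ^ 2)]
        refine Finset.sum_congr rfl fun n _ => ?_
        rw [hinner (m, n)]
    _ ≤ ‖vE‖ ^ 2 := hb
    _ = ∑ i, Complex.normSq (v i) := hnorm

lemma kron_dot_psi (ψ : Fin d × Fin d → ℂ) (x y : Fin d → ℂ) :
    star (vecKron x y) ⬝ᵥ ψ = ∑ m, (star x ⬝ᵥ uu ψ m) * (star y ⬝ᵥ rr ψ m) := by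
  calc star (vecKron x y) ⬝ᵥ ψ
      = ∑ k, ∑ l, ∑ m, (star x k * uu ψ m k) * (star y l * rr ψ m l) := by
        rw [dotProduct, Fintype.sum_prod_type]
        refine Finset.sum_congr rfl fun k _ => Finset.sum_congr rfl fun l _ => ?_
        rw [psi_decomp ψ k l, Finset.mul_sum]
        refine Finset.sum_congr rfl fun m _ => ?_
        simp only [Pi.star_apply, vecKron, star_mul']
        ring
    _ = ∑ k, ∑ m, ∑ l, (star x k * uu ψ m k) * (star y l * rr ψ m l) :=
        Finset.sum_congr rfl fun k _ => Finset.sum_comm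
    _ = ∑ m, ∑ k, ∑ l, (star x k * uu ψ m k) * (star y l * rr ψ m l) :=
        Finset.sum_comm
    _ = ∑ m, (star x ⬝ᵥ uu ψ m) * (star y ⬝ᵥ rr ψ m) := by
        refine Finset.sum_congr rfl fun m _ => ?_
        rw [dotProduct, dotProduct, Finset.sum_mul_sum]

lemma psi_dot_kron (ψ : Fin d × Fin d → ℂ) (x y : Fin d → ℂ) :
    star ψ ⬝ᵥ vecKron x y = ∑ m, (star (uu ψ m) ⬝ᵥ x) * (star (rr ψ m) ⬝ᵥ y) := by
  calc star ψ ⬝ᵥ vecKron x y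
      = ∑ k, ∑ l, ∑ m, (star (uu ψ m) k * x k) * (star (rr ψ m) l * y l) := by
        rw [dotProduct, Fintype.sum_prod_type]
        refine Finset.sum_congr rfl fun k _ => Finset.sum_congr rfl fun l _ => ?_
        have : star ψ (k, l) = ∑ m, star (uu ψ m k) * star (rr ψ m l) := by
          rw [Pi.star_apply, psi_decomp ψ k l, star_sum]
          exact Finset.sum_congr rfl fun m _ => star_mul' _ _
        rw [this, Finset.sum_mul]
        refine Finset.sum_congr rfl fun m _ => ?_
        simp only [Pi.star_apply, vecKron, star_mul']
        ring
    _ = ∑ k, ∑ m, ∑ l, (star (uu ψ m) k * x k) * (star (rr ψ m) l * y l) :=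
        Finset.sum_congr rfl fun k _ => Finset.sum_comm
    _ = ∑ m, ∑ k, ∑ l, (star (uu ψ m) k * x k) * (star (rr ψ m) l * y l) :=
        Finset.sum_comm
    _ = ∑ m, (star (uu ψ m) ⬝ᵥ x) * (star (rr ψ m) ⬝ᵥ y) := by
        refine Finset.sum_congr rfl fun m _ => ?_
        rw [dotProduct, dotProduct, Finset.sum_mul_sum]

end WNaux
open WNaux
set_option maxHeartbeats 1000000

/-- **Theorem 6: every NPT state mixed with white noise is detected.**
For `ρ_wn = p |ψ⟩⟨ψ| + (1-p)/D · 𝟙` with `D = d²`: if `ρ_wn^{T_A}` has a negative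
eigenvalue, then `ρ_wn` violates the Cauchy–Schwarz separability criterion. -/
theorem white_noise_npt_violates_criterion {d : ℕ}
    (ψ : Fin d × Fin d → ℂ) (hψ : star ψ ⬝ᵥ ψ = 1)
    (p : ℝ) (hp0 : 0 ≤ p) (hp1 : p ≤ 1)
    (ρwn : Matrix (Fin d × Fin d) (Fin d × Fin d) ℂ)
    (hρwn : ρwn = (p : ℂ) • Matrix.vecMulVec ψ (star ψ) +
      (((1 - p) / (d ^ 2 : ℝ) : ℝ) : ℂ) • (1 : Matrix (Fin d × Fin d) (Fin d × Fin d) ℂ))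
    (hNPT : ∃ (μ : ℝ) (v : Fin d × Fin d → ℂ), μ < 0 ∧ v ≠ 0 ∧
      partialTransposeA ρwn *ᵥ v = (μ : ℂ) • v) :
    ∃ (a α : Fin d → ℂ) (b β : Fin d → ℂ),
      (star (vecKron a β) ⬝ᵥ (ρwn *ᵥ vecKron a β)).re *
        (star (vecKron α b) ⬝ᵥ (ρwn *ᵥ vecKron α b)).re <
      ‖star (vecKron α β) ⬝ᵥ (ρwn *ᵥ vecKron a b)‖ ^ 2 := by
  classical
  obtain ⟨μ, v, hμ, hv0, hEig⟩ := hNPT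
  obtain ⟨i₁, hvne⟩ : ∃ i, v i ≠ 0 := by
    by_contra h; push_neg at h; exact hv0 (funext h)
  have hd : 0 < d := i₁.1.pos
  set c : ℝ := (1 - p) / (d ^ 2 : ℝ) with hcdef
  have hd2 : (0:ℝ) < (d:ℝ) ^ 2 := pow_pos (Nat.cast_pos.mpr hd) 2
  have hc0 : 0 ≤ c := div_nonneg (by linarith) (le_of_lt hd2)
  have hPT1 : partialTransposeA (1 : Matrix (Fin d × Fin d) (Fin d × Fin d) ℂ) = 1 := by
    ext x y
    show (1 : Matrix (Fin d × Fin d) (Fin d × Fin d) ℂ) (y.1, x.2) (x.1, y.2)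
      = (1 : Matrix (Fin d × Fin d) (Fin d × Fin d) ℂ) x y
    simp only [Matrix.one_apply, Prod.ext_iff]
    refine if_congr ?_ rfl rfl
    constructor
    · rintro ⟨h1, h2⟩; exact ⟨h1.symm, h2⟩
    · rintro ⟨h1, h2⟩; exact ⟨h1.symm, h2⟩
  have hA : partialTransposeA ρwn
      = (p:ℂ) • partialTransposeA (Matrix.vecMulVec ψ (star ψ)) + ((c:ℝ):ℂ) • 1 := by
    rw [hρwn]
    ext x y
    have h1 := congrFun (congrFun hPT1 x) y
    show ((p : ℂ) • Matrix.vecMulVec ψ (star ψ) +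
      ((c:ℝ):ℂ) • (1 : Matrix (Fin d × Fin d) (Fin d × Fin d) ℂ)) (y.1, x.2) (x.1, y.2) = _
    simp only [Matrix.add_apply, Matrix.smul_apply, smul_eq_mul]
    rw [show (1 : Matrix (Fin d × Fin d) (Fin d × Fin d) ℂ) (y.1, x.2) (x.1, y.2)
      = (1 : Matrix (Fin d × Fin d) (Fin d × Fin d) ℂ) x y from h1]
    rfl
  have hp : 0 < p := by
    rcases hp0.lt_or_eq with h | h
    · exact h
    · exfalso
      have hA0 : partialTransposeA ρwn = ((c:ℝ):ℂ) • 1 := by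
        rw [hA, ← h]; simp
      rw [hA0] at hEig
      have h2 := congrFun hEig i₁
      simp only [Matrix.smul_mulVec, Matrix.one_mulVec, Pi.smul_apply,
        smul_eq_mul] at h2
      have hcμ : (c:ℂ) = (μ:ℂ) := mul_right_cancel₀ hvne h2
      have h3 : c = μ := by exact_mod_cast hcμ
      have h4 : 0 < c := by
        rw [hcdef, ← h]
        exact div_pos (by norm_num) hd2
      linarith
  set t : ℝ := (c - μ) / p with htdef
  have ht : 0 < t := div_pos (by linarith) hp
  have hct : c < p * t := by
    have h1 : p * t = c - μ := by
      rw [htdef]; field_simp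
    linarith
  have hAv : partialTransposeA (Matrix.vecMulVec ψ (star ψ)) *ᵥ v = ((-t : ℝ) : ℂ) • v := by
    rw [hA] at hEig
    rw [Matrix.add_mulVec, Matrix.smul_mulVec, Matrix.smul_mulVec,
      Matrix.one_mulVec] at hEig
    funext i
    have h1 := congrFun hEig i
    simp only [Pi.add_apply, Pi.smul_apply, smul_eq_mul] at h1 ⊢
    apply mul_left_cancel₀ (show (p:ℂ) ≠ 0 by exact_mod_cast ne_of_gt hp)
    have h2 : ((p:ℂ)) * (((-t:ℝ):ℂ) * v i) = ((μ:ℝ):ℂ) * v i - ((c:ℝ):ℂ) * v i := by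
      have h3 : (p:ℂ) * ((-t:ℝ):ℂ) = ((μ:ℝ):ℂ) - ((c:ℝ):ℂ) := by
        rw [htdef]
        push_cast
        field_simp
        ring
      calc ((p:ℂ)) * (((-t:ℝ):ℂ) * v i) = ((p:ℂ) * ((-t:ℝ):ℂ)) * v i := by ring
        _ = (((μ:ℝ):ℂ) - ((c:ℝ):ℂ)) * v i := by rw [h3]
        _ = ((μ:ℝ):ℂ) * v i - ((c:ℝ):ℂ) * v i := by ring
    rw [h2]
    linear_combination h1
  set N : ℝ := ∑ i, Complex.normSq (v i) with hNdef
  have hN : 0 < N :=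
    Finset.sum_pos' (fun i _ => Complex.normSq_nonneg _)
      ⟨i₁, Finset.mem_univ _, Complex.normSq_pos.mpr hvne⟩
  have hvv : star v ⬝ᵥ v = (N : ℂ) := by
    rw [hNdef, dotProduct]
    push_cast
    refine Finset.sum_congr rfl fun i _ => ?_
    rw [Pi.star_apply, mul_comm]
    exact Complex.mul_conj (v i)
  have h1 := WNaux.Q_eq ψ v
  rw [hAv, dotProduct_smul, hvv, smul_eq_mul] at h1
  have h2 : (∑ m, ∑ n, ((starRingEnd ℂ) (DD ψ v n m) * DD ψ v m n)).re = -t * N := by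
    rw [← h1, ← Complex.ofReal_mul, Complex.ofReal_re]
  have h3 : (∑ m, ∑ n, ((starRingEnd ℂ) (DD ψ v n m) * DD ψ v m n)).re
      = ∑ m, ∑ n, ((starRingEnd ℂ) (DD ψ v n m) * DD ψ v m n).re := by
    rw [Complex.re_sum]
    exact Finset.sum_congr rfl fun m _ => Complex.re_sum _ _
  rw [h3] at h2
  clear h1 h3
  -- choose the two largest Schmidt coefficients
  obtain ⟨i0, -, hi0⟩ := Finset.exists_max_image (Finset.univ : Finset (Fin d)) (sg ψ)
    ⟨i₁.1, Finset.mem_univ _⟩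
  by_cases hall : ∀ j : Fin d, j = i0
  · exfalso
    have hsingle : ∑ m, ∑ n, ((starRingEnd ℂ) (DD ψ v n m) * DD ψ v m n).re
        = ((starRingEnd ℂ) (DD ψ v i0 i0) * DD ψ v i0 i0).re := by
      rw [Finset.sum_eq_single_of_mem i0 (Finset.mem_univ _)
        (fun b _ hb => absurd (hall b) hb)]
      rw [Finset.sum_eq_single_of_mem i0 (Finset.mem_univ _)
        (fun b _ hb => absurd (hall b) hb)]
    have hpos : 0 ≤ ((starRingEnd ℂ) (DD ψ v i0 i0) * DD ψ v i0 i0).re := by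
      have he : (starRingEnd ℂ) (DD ψ v i0 i0) * DD ψ v i0 i0
          = ((Complex.normSq (DD ψ v i0 i0) : ℝ) : ℂ) := by
        rw [mul_comm]; exact Complex.mul_conj _
      rw [he, Complex.ofReal_re]
      exact Complex.normSq_nonneg _
    rw [hsingle] at h2
    nlinarith
  push_neg at hall
  obtain ⟨j', hj'⟩ := hall
  obtain ⟨j0, hj0mem, hj0⟩ := Finset.exists_max_image (Finset.univ.erase i0) (sg ψ)
    ⟨j', Finset.mem_erase.mpr ⟨hj', Finset.mem_univ _⟩⟩
  have hji : j0 ≠ i0 := (Finset.mem_erase.mp hj0mem).1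
  set L : ℝ := Real.sqrt (sg ψ i0) * Real.sqrt (sg ψ j0) with hLdef
  have hL0 : 0 ≤ L := mul_nonneg (Real.sqrt_nonneg _) (Real.sqrt_nonneg _)
  have hLmax : ∀ m n : Fin d, m ≠ n → Real.sqrt (sg ψ m) * Real.sqrt (sg ψ n) ≤ L := by
    intro m n hmn
    have hsm : ∀ k, Real.sqrt (sg ψ k) ≤ Real.sqrt (sg ψ i0) :=
      fun k => Real.sqrt_le_sqrt (hi0 k (Finset.mem_univ _))
    have hsj : ∀ k, k ≠ i0 → Real.sqrt (sg ψ k) ≤ Real.sqrt (sg ψ j0) :=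
      fun k hk => Real.sqrt_le_sqrt (hj0 k (Finset.mem_erase.mpr ⟨hk, Finset.mem_univ _⟩))
    rw [hLdef]
    by_cases hm : m = i0
    · subst hm
      exact mul_le_mul_of_nonneg_left (hsj n (Ne.symm hmn)) (Real.sqrt_nonneg _)
    · by_cases hn : n = i0
      · subst hn
        rw [mul_comm]
        exact mul_le_mul_of_nonneg_left (hsj m hm) (Real.sqrt_nonneg _)
      · exact mul_le_mul (hsm m) (hsj n hn) (Real.sqrt_nonneg _) (Real.sqrt_nonneg _)
  have hPB : ∀ m n : Fin d,
      -(L/2) * (‖CC ψ v m n‖ ^ 2 + ‖CC ψ v n m‖ ^ 2)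
        ≤ ((starRingEnd ℂ) (DD ψ v n m) * DD ψ v m n).re := by
    intro m n
    have hBnn : 0 ≤ ‖CC ψ v m n‖ ^ 2 + ‖CC ψ v n m‖ ^ 2 := by
      positivity
    rcases (sg_nonneg ψ n).lt_or_eq with hn | hn
    · rcases (sg_nonneg ψ m).lt_or_eq with hm | hm
      · rw [DD_eq ψ v m n hn, DD_eq ψ v n m hm]
        have he : (starRingEnd ℂ) ((Real.sqrt (sg ψ m) :ℂ) * CC ψ v n m) *
            ((Real.sqrt (sg ψ n):ℂ) * CC ψ v m n)
            = ((Real.sqrt (sg ψ m) * Real.sqrt (sg ψ n) : ℝ) : ℂ) *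
              ((starRingEnd ℂ) (CC ψ v n m) * CC ψ v m n) := by
          rw [_root_.map_mul, Complex.conj_ofReal]
          push_cast
          ring
        rw [he, Complex.re_ofReal_mul]
        have hk0 : 0 ≤ Real.sqrt (sg ψ m) * Real.sqrt (sg ψ n) :=
          mul_nonneg (Real.sqrt_nonneg _) (Real.sqrt_nonneg _)
        have hqlb : -((‖CC ψ v m n‖ ^ 2 + ‖CC ψ v n m‖ ^ 2) / 2)
            ≤ ((starRingEnd ℂ) (CC ψ v n m) * CC ψ v m n).re := by
          have hq1 : |((starRingEnd ℂ) (CC ψ v n m) * CC ψ v m n).re|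
              ≤ ‖CC ψ v n m‖ * ‖CC ψ v m n‖ := by
            calc |((starRingEnd ℂ) (CC ψ v n m) * CC ψ v m n).re|
                ≤ ‖(starRingEnd ℂ) (CC ψ v n m) * CC ψ v m n‖ :=
                  Complex.abs_re_le_norm _
              _ = ‖CC ψ v n m‖ * ‖CC ψ v m n‖ := by
                  rw [norm_mul, Complex.norm_conj]
          have hq2 : ‖CC ψ v n m‖ * ‖CC ψ v m n‖
              ≤ (‖CC ψ v m n‖ ^ 2 + ‖CC ψ v n m‖ ^ 2) / 2 := by
            nlinarith [sq_nonneg (‖CC ψ v m n‖ - ‖CC ψ v n m‖)]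
          have := neg_abs_le (((starRingEnd ℂ) (CC ψ v n m) * CC ψ v m n).re)
          linarith
        by_cases hmn : m = n
        · subst hmn
          have hq0 : 0 ≤ ((starRingEnd ℂ) (CC ψ v m m) * CC ψ v m m).re := by
            have he2 : (starRingEnd ℂ) (CC ψ v m m) * CC ψ v m m
                = ((Complex.normSq (CC ψ v m m) : ℝ) : ℂ) := by
              rw [mul_comm]; exact Complex.mul_conj _
            rw [he2, Complex.ofReal_re]
            exact Complex.normSq_nonneg _
          linarith [mul_nonneg hk0 hq0, mul_nonneg hL0 hBnn]
        · have hkL : Real.sqrt (sg ψ m) * Real.sqrt (sg ψ n) ≤ L := hLmax m n hmn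
          linarith [mul_le_mul_of_nonneg_left hqlb hk0, mul_le_mul_of_nonneg_right hkL hBnn]
      · rw [DD_zero ψ v n m hm.symm]
        simp only [map_zero, zero_mul, Complex.zero_re]
        linarith [mul_nonneg hL0 hBnn]
    · rw [DD_zero ψ v m n hn.symm]
      simp only [mul_zero, Complex.zero_re]
      linarith [mul_nonneg hL0 hBnn]
  have hX : ∑ m, ∑ n, ‖CC ψ v m n‖ ^ 2 ≤ N := bessel ψ v
  have hlow : -L * N ≤ -t * N := by
    have hs1 : ∑ m, ∑ n,
        (-(L/2) * (‖CC ψ v m n‖ ^ 2 + ‖CC ψ v n m‖ ^ 2))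
        ≤ ∑ m, ∑ n, ((starRingEnd ℂ) (DD ψ v n m) * DD ψ v m n).re :=
      Finset.sum_le_sum fun m _ => Finset.sum_le_sum fun n _ => hPB m n
    have hswap : ∑ m, ∑ n, ‖CC ψ v n m‖ ^ 2
        = ∑ m, ∑ n, ‖CC ψ v m n‖ ^ 2 := Finset.sum_comm
    have hs2 : ∑ m, ∑ n,
        (-(L/2) * (‖CC ψ v m n‖ ^ 2 + ‖CC ψ v n m‖ ^ 2))
        = -L * ∑ m, ∑ n, ‖CC ψ v m n‖ ^ 2 := by
      calc ∑ m, ∑ n, (-(L/2) * (‖CC ψ v m n‖ ^ 2 + ‖CC ψ v n m‖ ^ 2))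
          = ∑ m, (∑ n, (-(L/2) * ‖CC ψ v m n‖ ^ 2)
              + ∑ n, (-(L/2) * ‖CC ψ v n m‖ ^ 2)) := by
            refine Finset.sum_congr rfl fun m _ => ?_
            rw [← Finset.sum_add_distrib]
            exact Finset.sum_congr rfl fun n _ => by ring
        _ = (∑ m, ∑ n, (-(L/2) * ‖CC ψ v m n‖ ^ 2))
            + ∑ m, ∑ n, (-(L/2) * ‖CC ψ v n m‖ ^ 2) := Finset.sum_add_distrib
        _ = -(L/2) * (∑ m, ∑ n, ‖CC ψ v m n‖ ^ 2)
            + -(L/2) * (∑ m, ∑ n, ‖CC ψ v n m‖ ^ 2) := by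
            congr 1
            · rw [Finset.mul_sum]
              exact Finset.sum_congr rfl fun m _ => (Finset.mul_sum _ _ _).symm
            · rw [Finset.mul_sum]
              exact Finset.sum_congr rfl fun m _ => (Finset.mul_sum _ _ _).symm
        _ = -L * ∑ m, ∑ n, ‖CC ψ v m n‖ ^ 2 := by rw [hswap]; ring
    have hs3 : -L * N ≤ -L * ∑ m, ∑ n, ‖CC ψ v m n‖ ^ 2 := by nlinarith
    rw [hs2] at hs1
    linarith [h2 ▸ hs1]
  have htL : t ≤ L := le_of_mul_le_mul_right (by linarith) hN
  have hcL : c < p * L := lt_of_lt_of_le hct (by nlinarith)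
  have hLpos : 0 < L := by nlinarith
  have hσi : 0 < sg ψ i0 := by
    rcases (sg_nonneg ψ i0).lt_or_eq with h | h
    · exact h
    · exfalso
      rw [hLdef, ← h, Real.sqrt_zero, zero_mul] at hLpos
      exact lt_irrefl _ hLpos
  have hσj : 0 < sg ψ j0 := by
    rcases (sg_nonneg ψ j0).lt_or_eq with h | h
    · exact h
    · exfalso
      rw [hLdef, ← h, Real.sqrt_zero, mul_zero] at hLpos
      exact lt_irrefl _ hLpos
  -- the witnesses
  refine ⟨uu ψ i0, uu ψ j0, rr ψ i0, rr ψ j0, ?_⟩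
  have hdU : ∀ m n, star (uu ψ m) ⬝ᵥ uu ψ n = if m = n then 1 else 0 := by
    intro m n
    have he : star (uu ψ m) ⬝ᵥ uu ψ n = ∑ k, (starRingEnd ℂ) (uu ψ m k) * uu ψ n k := rfl
    rw [he, uu_orthonormal]
  have hdR : ∀ m n, star (rr ψ m) ⬝ᵥ rr ψ n = if m = n then ((sg ψ m : ℝ):ℂ) else 0 := by
    intro m n
    have he : star (rr ψ m) ⬝ᵥ rr ψ n = ∑ k, (starRingEnd ℂ) (rr ψ m k) * rr ψ n k := rfl
    rw [he, rr_orth]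
  have hv1 : star (vecKron (uu ψ i0) (rr ψ j0)) ⬝ᵥ ψ = 0 := by
    rw [kron_dot_psi]
    refine Finset.sum_eq_zero fun m _ => ?_
    rw [hdU, hdR]
    by_cases hm1 : i0 = m
    · by_cases hm2 : j0 = m
      · exact absurd (hm2.trans hm1.symm) hji
      · simp [hm1, hm2]
    · simp [hm1]
  have hv2 : star (vecKron (uu ψ j0) (rr ψ i0)) ⬝ᵥ ψ = 0 := by
    rw [kron_dot_psi]
    refine Finset.sum_eq_zero fun m _ => ?_
    rw [hdU, hdR]
    by_cases hm1 : j0 = m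
    · by_cases hm2 : i0 = m
      · exact absurd (hm1.trans hm2.symm) hji
      · simp [hm1, hm2]
    · simp [hm1]
  have hv3 : star (vecKron (uu ψ j0) (rr ψ j0)) ⬝ᵥ ψ = ((sg ψ j0 : ℝ) : ℂ) := by
    rw [kron_dot_psi]
    rw [Finset.sum_eq_single_of_mem j0 (Finset.mem_univ _)
      (fun b _ hb => by rw [hdU, hdR, if_neg (Ne.symm hb), zero_mul])]
    rw [hdU, hdR]
    simp
  have hv4 : star ψ ⬝ᵥ vecKron (uu ψ i0) (rr ψ i0) = ((sg ψ i0 : ℝ) : ℂ) := by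
    rw [psi_dot_kron]
    rw [Finset.sum_eq_single_of_mem i0 (Finset.mem_univ _)
      (fun b _ hb => by rw [hdU, hdR, if_neg hb, zero_mul])]
    rw [hdU, hdR]
    simp
  have hk1 : star (vecKron (uu ψ i0) (rr ψ j0)) ⬝ᵥ vecKron (uu ψ i0) (rr ψ j0)
      = ((sg ψ j0:ℝ):ℂ) := by
    rw [kron_dot_kron, hdU, hdR]
    simp
  have hk2 : star (vecKron (uu ψ j0) (rr ψ i0)) ⬝ᵥ vecKron (uu ψ j0) (rr ψ i0)
      = ((sg ψ i0:ℝ):ℂ) := by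
    rw [kron_dot_kron, hdU, hdR]
    simp
  have hk3 : star (vecKron (uu ψ j0) (rr ψ j0)) ⬝ᵥ vecKron (uu ψ i0) (rr ψ i0) = 0 := by
    rw [kron_dot_kron, hdU]
    simp [hji]
  have hρdot : ∀ x y : Fin d × Fin d → ℂ, star x ⬝ᵥ (ρwn *ᵥ y)
      = (p:ℂ) * ((star x ⬝ᵥ ψ) * (star ψ ⬝ᵥ y)) + ((c:ℝ):ℂ) * (star x ⬝ᵥ y) := by
    intro x y
    rw [hρwn, Matrix.add_mulVec, Matrix.smul_mulVec, Matrix.smul_mulVec,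
      Matrix.one_mulVec, vecMulVec_mulVec']
    rw [dotProduct_add, dotProduct_smul, dotProduct_smul, dotProduct_smul]
    simp only [smul_eq_mul]
    ring
  rw [hρdot, hρdot, hρdot, hv1, hv2, hv3, hv4, hk1, hk2, hk3]
  simp only [zero_mul, mul_zero, add_zero, zero_add]
  rw [← Complex.ofReal_mul, Complex.ofReal_re, ← Complex.ofReal_mul, Complex.ofReal_re]
  rw [← Complex.ofReal_mul, ← Complex.ofReal_mul, Complex.norm_real, Real.norm_eq_abs]
  rw [abs_of_nonneg (mul_nonneg hp0 (mul_nonneg (sg_nonneg ψ j0) (sg_nonneg ψ i0)))]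
  have hsq : L ^ 2 = sg ψ i0 * sg ψ j0 := by
    rw [hLdef, mul_pow, Real.sq_sqrt (sg_nonneg ψ i0), Real.sq_sqrt (sg_nonneg ψ j0)]
  have h5 : c ^ 2 < p ^ 2 * (sg ψ i0 * sg ψ j0) := by nlinarith
  nlinarith [mul_pos hσi hσj, mul_lt_mul_of_pos_right h5 (mul_pos hσi hσj)]
end
end

section
/- Let ρ be a fully separable tripartite density matrix on ℂ^{dA}⊗ℂ^{dB}⊗ℂ^{dC}, and let A₁, A₂ (dA×dA), B₁, B₂ (dB×dB), C₁, C₂ (dC×dC) be complex matrices. Then |Tr((A₁A₂ ⊗ B₁B₂ ⊗ C₁C₂)ρ)|⁴ ≤ Re Tr((A₁A₁† ⊗ B₁B₁† ⊗ C₂†C₂)ρ) · Re Tr((A₁A₁† ⊗ B₂†B₂ ⊗ C₁C₁†)ρ) · Re Tr((A₂†A₂ ⊗ B₁B₁† ⊗ C₁C₁†)ρ) · Re Tr((A₂†A₂ ⊗ B₂†B₂ ⊗ C₂†C₂)ρ). -/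
open Matrix
open scoped Kronecker ComplexOrder

noncomputable section

/-- A tripartite state is fully separable if it is a finite convex combination of
Kronecker products of density matrices on the three factors. -/
def FullySeparable {dA dB dC : ℕ}
    (ρ : Matrix (Fin dA × Fin dB × Fin dC) (Fin dA × Fin dB × Fin dC) ℂ) : Prop :=
  ∃ (n : ℕ) (p : Fin n → ℝ) (ρA : Fin n → Matrix (Fin dA) (Fin dA) ℂ)
    (ρB : Fin n → Matrix (Fin dB) (Fin dB) ℂ) (ρC : Fin n → Matrix (Fin dC) (Fin dC) ℂ),
    (∀ k, 0 ≤ p k) ∧ (∑ k, p k = 1) ∧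
    (∀ k, IsDensityMatrix (ρA k)) ∧ (∀ k, IsDensityMatrix (ρB k)) ∧
    (∀ k, IsDensityMatrix (ρC k)) ∧
    ρ = ∑ k, (p k : ℂ) • (ρA k ⊗ₖ (ρB k ⊗ₖ ρC k))



namespace SepAux

variable {ι : Type*} [Fintype ι] [DecidableEq ι]

open scoped MatrixOrder

lemma trace_form (M N : Matrix ι ι ℂ) :
    (Mᴴ * N).trace = ∑ q : ι × ι, (starRingEnd ℂ) (M q.1 q.2) * N q.1 q.2 := by
  rw [Matrix.trace, Fintype.sum_prod_type]
  simp only [Matrix.diag, Matrix.mul_apply, Matrix.conjTranspose_apply]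
  rw [Finset.sum_comm]
  rfl

lemma trace_conjT_self (M : Matrix ι ι ℂ) :
    (Mᴴ * M).trace = ((∑ q : ι × ι, ‖M q.1 q.2‖ ^ 2 : ℝ) : ℂ) := by
  rw [trace_form, Complex.ofReal_sum]
  refine Finset.sum_congr rfl fun q _ => ?_
  rw [← Complex.normSq_eq_norm_sq, mul_comm, Complex.mul_conj]

lemma cs_core (M N : Matrix ι ι ℂ) :
    ‖(Mᴴ * N).trace‖ ^ 2 ≤ ((Mᴴ * M).trace).re * ((Nᴴ * N).trace).re := by
  have hM : ((Mᴴ * M).trace).re = ∑ q : ι × ι, ‖M q.1 q.2‖ ^ 2 := by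
    rw [trace_conjT_self]; exact Complex.ofReal_re _
  have hN : ((Nᴴ * N).trace).re = ∑ q : ι × ι, ‖N q.1 q.2‖ ^ 2 := by
    rw [trace_conjT_self]; exact Complex.ofReal_re _
  have habs : ‖(Mᴴ * N).trace‖ ≤
      ∑ q : ι × ι, ‖M q.1 q.2‖ * ‖N q.1 q.2‖ := by
    rw [trace_form]
    refine (norm_sum_le _ _).trans (le_of_eq (Finset.sum_congr rfl fun q _ => ?_))
    rw [norm_mul, Complex.norm_conj]
  calc ‖(Mᴴ * N).trace‖ ^ 2
      ≤ (∑ q : ι × ι, ‖M q.1 q.2‖ * ‖N q.1 q.2‖) ^ 2 :=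
        pow_le_pow_left₀ (norm_nonneg _) habs 2
    _ ≤ (∑ q : ι × ι, ‖M q.1 q.2‖ ^ 2) * ∑ q : ι × ι, ‖N q.1 q.2‖ ^ 2 :=
        Finset.sum_mul_sq_le_sq_mul_sq _ _ _
    _ = _ := by rw [hM, hN]

lemma trace_real {σ : Matrix ι ι ℂ} (hσ : σ.PosSemidef) (X : Matrix ι ι ℂ) :
    ∃ r : ℝ, 0 ≤ r ∧ ((Xᴴ * X) * σ).trace = (r : ℂ) := by
  set S := CFC.sqrt σ with hSdef
  have hS : S * S = σ := CFC.sqrt_mul_sqrt_self σ hσ.nonneg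
  have hH : Sᴴ = S := (CFC.sqrt_nonneg σ).posSemidef.1
  have e : ((X * S)ᴴ * (X * S)).trace = ((Xᴴ * X) * σ).trace := by
    rw [conjTranspose_mul, hH, Matrix.mul_assoc S Xᴴ (X * S),
      Matrix.trace_mul_comm S (Xᴴ * (X * S)), ← hS]
    simp only [Matrix.mul_assoc]
  refine ⟨∑ q : ι × ι, ‖(X * S) q.1 q.2‖ ^ 2, ?_, ?_⟩
  · exact Finset.sum_nonneg fun q _ => sq_nonneg _
  · rw [← e, trace_conjT_self]

lemma trace_real' {σ : Matrix ι ι ℂ} (hσ : σ.PosSemidef) (X : Matrix ι ι ℂ) :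
    ∃ r : ℝ, 0 ≤ r ∧ ((X * Xᴴ) * σ).trace = (r : ℂ) := by
  simpa using trace_real hσ Xᴴ

lemma cs_sigma {σ : Matrix ι ι ℂ} (hσ : σ.PosSemidef) (X Y : Matrix ι ι ℂ) :
    ‖((X * Y) * σ).trace‖ ^ 2 ≤
      (((X * Xᴴ) * σ).trace).re * (((Yᴴ * Y) * σ).trace).re := by
  set S := CFC.sqrt σ with hSdef
  have hS : S * S = σ := CFC.sqrt_mul_sqrt_self σ hσ.nonneg
  have hH : Sᴴ = S := (CFC.sqrt_nonneg σ).posSemidef.1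
  have e1 : ((Xᴴ * S)ᴴ * (Y * S)).trace = ((X * Y) * σ).trace := by
    rw [conjTranspose_mul, conjTranspose_conjTranspose, hH, Matrix.mul_assoc S X (Y * S),
      Matrix.trace_mul_comm S (X * (Y * S)), ← hS]
    simp only [Matrix.mul_assoc]
  have e2 : ((Xᴴ * S)ᴴ * (Xᴴ * S)).trace = ((X * Xᴴ) * σ).trace := by
    rw [conjTranspose_mul, conjTranspose_conjTranspose, hH, Matrix.mul_assoc S X (Xᴴ * S),
      Matrix.trace_mul_comm S (X * (Xᴴ * S)), ← hS]
    simp only [Matrix.mul_assoc]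
  have e3 : ((Y * S)ᴴ * (Y * S)).trace = ((Yᴴ * Y) * σ).trace := by
    rw [conjTranspose_mul, hH, Matrix.mul_assoc S Yᴴ (Y * S),
      Matrix.trace_mul_comm S (Yᴴ * (Y * S)), ← hS]
    simp only [Matrix.mul_assoc]
  rw [← e1, ← e2, ← e3]
  exact cs_core _ _

lemma four_cs {n : ℕ} {t1 t2 t3 t4 x : Fin n → ℝ}
    (h1 : ∀ k, 0 ≤ t1 k) (h2 : ∀ k, 0 ≤ t2 k) (h3 : ∀ k, 0 ≤ t3 k) (h4 : ∀ k, 0 ≤ t4 k)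
    (hx : ∀ k, 0 ≤ x k) (h : ∀ k, x k ^ 4 ≤ t1 k * t2 k * (t3 k * t4 k)) :
    (∑ k, x k) ^ 4 ≤ (∑ k, t1 k) * (∑ k, t2 k) * ((∑ k, t3 k) * (∑ k, t4 k)) := by
  set y : Fin n → ℝ := fun k => Real.sqrt (Real.sqrt (t1 k * t2 k) * Real.sqrt (t3 k * t4 k))
    with hy
  have hxy : ∀ k, x k ≤ y k := by
    intro k
    have hy4 : y k ^ 4 = t1 k * t2 k * (t3 k * t4 k) := by
      have : y k ^ 2 = Real.sqrt (t1 k * t2 k) * Real.sqrt (t3 k * t4 k) :=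
        Real.sq_sqrt (mul_nonneg (Real.sqrt_nonneg _) (Real.sqrt_nonneg _))
      calc y k ^ 4 = (y k ^ 2) ^ 2 := by ring
        _ = Real.sqrt (t1 k * t2 k) ^ 2 * Real.sqrt (t3 k * t4 k) ^ 2 := by rw [this]; ring
        _ = t1 k * t2 k * (t3 k * t4 k) := by
            rw [Real.sq_sqrt (mul_nonneg (h1 k) (h2 k)), Real.sq_sqrt (mul_nonneg (h3 k) (h4 k))]
    have h4' : x k ^ 4 ≤ y k ^ 4 := by rw [hy4]; exact h k
    exact le_of_pow_le_pow_left₀ (by norm_num) (Real.sqrt_nonneg _) h4'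
  have hA : (∑ k, y k) ^ 2 ≤ (∑ k, Real.sqrt (t1 k * t2 k)) * ∑ k, Real.sqrt (t3 k * t4 k) :=
    Finset.sum_sq_le_sum_mul_sum_of_sq_eq_mul _ (fun k _ => Real.sqrt_nonneg _)
      (fun k _ => Real.sqrt_nonneg _)
      (fun k _ => Real.sq_sqrt (mul_nonneg (Real.sqrt_nonneg _) (Real.sqrt_nonneg _)))
  have hB : (∑ k, Real.sqrt (t1 k * t2 k)) ^ 2 ≤ (∑ k, t1 k) * ∑ k, t2 k :=
    Finset.sum_sq_le_sum_mul_sum_of_sq_eq_mul _ (fun k _ => h1 k) (fun k _ => h2 k)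
      (fun k _ => Real.sq_sqrt (mul_nonneg (h1 k) (h2 k)))
  have hC : (∑ k, Real.sqrt (t3 k * t4 k)) ^ 2 ≤ (∑ k, t3 k) * ∑ k, t4 k :=
    Finset.sum_sq_le_sum_mul_sum_of_sq_eq_mul _ (fun k _ => h3 k) (fun k _ => h4 k)
      (fun k _ => Real.sq_sqrt (mul_nonneg (h3 k) (h4 k)))
  calc (∑ k, x k) ^ 4 ≤ (∑ k, y k) ^ 4 :=
        pow_le_pow_left₀ (Finset.sum_nonneg fun k _ => hx k) (Finset.sum_le_sum fun k _ => hxy k) 4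
    _ = ((∑ k, y k) ^ 2) ^ 2 := by ring
    _ ≤ ((∑ k, Real.sqrt (t1 k * t2 k)) * ∑ k, Real.sqrt (t3 k * t4 k)) ^ 2 :=
        pow_le_pow_left₀ (sq_nonneg _) hA 2
    _ = (∑ k, Real.sqrt (t1 k * t2 k)) ^ 2 * (∑ k, Real.sqrt (t3 k * t4 k)) ^ 2 := by ring
    _ ≤ (∑ k, t1 k) * (∑ k, t2 k) * ((∑ k, t3 k) * (∑ k, t4 k)) :=
        mul_le_mul hB hC (sq_nonneg _)
          (mul_nonneg (Finset.sum_nonneg fun k _ => h1 k) (Finset.sum_nonneg fun k _ => h2 k))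

lemma per_k {p ab bb cb α β γ δ ε ζ : ℝ} (hp : 0 ≤ p)
    (hα : 0 ≤ α) (hβ : 0 ≤ β) (hγ : 0 ≤ γ) (hδ : 0 ≤ δ) (hε : 0 ≤ ε) (hζ : 0 ≤ ζ)
    (h1 : ab ^ 2 ≤ α * β) (h2 : bb ^ 2 ≤ γ * δ) (h3 : cb ^ 2 ≤ ε * ζ) :
    (p * (ab * (bb * cb))) ^ 4 ≤
      (p * (α * (γ * ζ))) * (p * (α * (δ * ε))) * ((p * (β * (γ * ε))) * (p * (β * (δ * ζ)))) := by
  have hm : (ab * (bb * cb)) ^ 2 ≤ (α * β) * ((γ * δ) * (ε * ζ)) := by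
    calc (ab * (bb * cb)) ^ 2 = ab ^ 2 * (bb ^ 2 * cb ^ 2) := by ring
      _ ≤ (α * β) * ((γ * δ) * (ε * ζ)) :=
        mul_le_mul h1 (mul_le_mul h2 h3 (sq_nonneg _) (mul_nonneg hγ hδ))
          (mul_nonneg (sq_nonneg _) (sq_nonneg _)) (mul_nonneg hα hβ)
  calc (p * (ab * (bb * cb))) ^ 4 = p ^ 4 * ((ab * (bb * cb)) ^ 2) ^ 2 := by ring
    _ ≤ p ^ 4 * (((α * β) * ((γ * δ) * (ε * ζ))) ^ 2) := by
        exact mul_le_mul_of_nonneg_left (pow_le_pow_left₀ (sq_nonneg _) hm 2) (by positivity)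
    _ = _ := by ring

end SepAux

/-- **The tripartite criterion Eq. (38).**  For every fully separable tripartite state,
`|⟨A₁A₂ ⊗ B₁B₂ ⊗ C₁C₂⟩|⁴ ≤ ⟨A₁A₁†⊗B₁B₁†⊗C₂†C₂⟩ ⟨A₁A₁†⊗B₂†B₂⊗C₁C₁†⟩
⟨A₂†A₂⊗B₁B₁†⊗C₁C₁†⟩ ⟨A₂†A₂⊗B₂†B₂⊗C₂†C₂⟩`. -/
theorem fully_separable_fourth_power_criterion {dA dB dC : ℕ}
    (ρ : Matrix (Fin dA × Fin dB × Fin dC) (Fin dA × Fin dB × Fin dC) ℂ)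
    (hρ : IsDensityMatrix ρ) (hsep : FullySeparable ρ)
    (A₁ A₂ : Matrix (Fin dA) (Fin dA) ℂ) (B₁ B₂ : Matrix (Fin dB) (Fin dB) ℂ)
    (C₁ C₂ : Matrix (Fin dC) (Fin dC) ℂ) :
    ‖(((A₁ * A₂) ⊗ₖ ((B₁ * B₂) ⊗ₖ (C₁ * C₂))) * ρ).trace‖ ^ 4 ≤
      ((((A₁ * A₁ᴴ) ⊗ₖ ((B₁ * B₁ᴴ) ⊗ₖ (C₂ᴴ * C₂))) * ρ).trace).re *
      ((((A₁ * A₁ᴴ) ⊗ₖ ((B₂ᴴ * B₂) ⊗ₖ (C₁ * C₁ᴴ))) * ρ).trace).re *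
      ((((A₂ᴴ * A₂) ⊗ₖ ((B₁ * B₁ᴴ) ⊗ₖ (C₁ * C₁ᴴ))) * ρ).trace).re *
      ((((A₂ᴴ * A₂) ⊗ₖ ((B₂ᴴ * B₂) ⊗ₖ (C₂ᴴ * C₂))) * ρ).trace).re := by
  obtain ⟨n, p, ρA, ρB, ρC, hp, -, hA, hB, hC, hEq⟩ := hsep
  choose α hα0 hαe using fun k => SepAux.trace_real' (hA k).1 A₁
  choose β hβ0 hβe using fun k => SepAux.trace_real (hA k).1 A₂
  choose γ hγ0 hγe using fun k => SepAux.trace_real' (hB k).1 B₁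
  choose δ hδ0 hδe using fun k => SepAux.trace_real (hB k).1 B₂
  choose ε hε0 hεe using fun k => SepAux.trace_real' (hC k).1 C₁
  choose ζ hζ0 hζe using fun k => SepAux.trace_real (hC k).1 C₂
  have hexp : ∀ (M : Matrix (Fin dA) (Fin dA) ℂ) (N : Matrix (Fin dB) (Fin dB) ℂ)
      (P : Matrix (Fin dC) (Fin dC) ℂ),
      ((M ⊗ₖ (N ⊗ₖ P)) * ρ).trace
        = ∑ k, (p k : ℂ) * ((M * ρA k).trace * ((N * ρB k).trace * (P * ρC k).trace)) := by
    intro M N P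
    rw [hEq, Finset.mul_sum, Matrix.trace_sum]
    refine Finset.sum_congr rfl fun k _ => ?_
    rw [Matrix.mul_smul, Matrix.trace_smul, ← Matrix.mul_kronecker_mul, ← Matrix.mul_kronecker_mul,
      Matrix.trace_kronecker, Matrix.trace_kronecker, smul_eq_mul]
  have hT1 : ((((A₁ * A₁ᴴ) ⊗ₖ ((B₁ * B₁ᴴ) ⊗ₖ (C₂ᴴ * C₂))) * ρ).trace).re
      = ∑ k, p k * (α k * (γ k * ζ k)) := by
    rw [hexp, Complex.re_sum]
    refine Finset.sum_congr rfl fun k _ => ?_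
    rw [hαe, hγe, hζe, ← Complex.ofReal_mul, ← Complex.ofReal_mul, ← Complex.ofReal_mul,
      Complex.ofReal_re]
  have hT2 : ((((A₁ * A₁ᴴ) ⊗ₖ ((B₂ᴴ * B₂) ⊗ₖ (C₁ * C₁ᴴ))) * ρ).trace).re
      = ∑ k, p k * (α k * (δ k * ε k)) := by
    rw [hexp, Complex.re_sum]
    refine Finset.sum_congr rfl fun k _ => ?_
    rw [hαe, hδe, hεe, ← Complex.ofReal_mul, ← Complex.ofReal_mul, ← Complex.ofReal_mul,
      Complex.ofReal_re]
  have hT3 : ((((A₂ᴴ * A₂) ⊗ₖ ((B₁ * B₁ᴴ) ⊗ₖ (C₁ * C₁ᴴ))) * ρ).trace).re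
      = ∑ k, p k * (β k * (γ k * ε k)) := by
    rw [hexp, Complex.re_sum]
    refine Finset.sum_congr rfl fun k _ => ?_
    rw [hβe, hγe, hεe, ← Complex.ofReal_mul, ← Complex.ofReal_mul, ← Complex.ofReal_mul,
      Complex.ofReal_re]
  have hT4 : ((((A₂ᴴ * A₂) ⊗ₖ ((B₂ᴴ * B₂) ⊗ₖ (C₂ᴴ * C₂))) * ρ).trace).re
      = ∑ k, p k * (β k * (δ k * ζ k)) := by
    rw [hexp, Complex.re_sum]
    refine Finset.sum_congr rfl fun k _ => ?_
    rw [hβe, hδe, hζe, ← Complex.ofReal_mul, ← Complex.ofReal_mul, ← Complex.ofReal_mul,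
      Complex.ofReal_re]
  have hCSa : ∀ k, ‖((A₁ * A₂) * ρA k).trace‖ ^ 2 ≤ α k * β k := by
    intro k
    have h := SepAux.cs_sigma (hA k).1 A₁ A₂
    rwa [hαe, hβe, Complex.ofReal_re, Complex.ofReal_re] at h
  have hCSb : ∀ k, ‖((B₁ * B₂) * ρB k).trace‖ ^ 2 ≤ γ k * δ k := by
    intro k
    have h := SepAux.cs_sigma (hB k).1 B₁ B₂
    rwa [hγe, hδe, Complex.ofReal_re, Complex.ofReal_re] at h
  have hCSc : ∀ k, ‖((C₁ * C₂) * ρC k).trace‖ ^ 2 ≤ ε k * ζ k := by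
    intro k
    have h := SepAux.cs_sigma (hC k).1 C₁ C₂
    rwa [hεe, hζe, Complex.ofReal_re, Complex.ofReal_re] at h
  have habs : ‖(((A₁ * A₂) ⊗ₖ ((B₁ * B₂) ⊗ₖ (C₁ * C₂))) * ρ).trace‖
      ≤ ∑ k, p k * (‖((A₁ * A₂) * ρA k).trace‖ *
          (‖((B₁ * B₂) * ρB k).trace‖ * ‖((C₁ * C₂) * ρC k).trace‖)) := by
    rw [hexp]
    refine (norm_sum_le _ _).trans (le_of_eq (Finset.sum_congr rfl fun k _ => ?_))
    rw [norm_mul, norm_mul, norm_mul, Complex.norm_real,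
      Real.norm_eq_abs, abs_of_nonneg (hp k)]
  calc ‖(((A₁ * A₂) ⊗ₖ ((B₁ * B₂) ⊗ₖ (C₁ * C₂))) * ρ).trace‖ ^ 4
      ≤ (∑ k, p k * (‖((A₁ * A₂) * ρA k).trace‖ *
          (‖((B₁ * B₂) * ρB k).trace‖ *
            ‖((C₁ * C₂) * ρC k).trace‖))) ^ 4 :=
        pow_le_pow_left₀ (norm_nonneg _) habs 4
    _ ≤ (∑ k, p k * (α k * (γ k * ζ k))) * (∑ k, p k * (α k * (δ k * ε k))) *
        ((∑ k, p k * (β k * (γ k * ε k))) * (∑ k, p k * (β k * (δ k * ζ k)))) := by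
        refine SepAux.four_cs (fun k => ?_) (fun k => ?_) (fun k => ?_) (fun k => ?_)
          (fun k => ?_) (fun k => ?_)
        · exact mul_nonneg (hp k) (mul_nonneg (hα0 k) (mul_nonneg (hγ0 k) (hζ0 k)))
        · exact mul_nonneg (hp k) (mul_nonneg (hα0 k) (mul_nonneg (hδ0 k) (hε0 k)))
        · exact mul_nonneg (hp k) (mul_nonneg (hβ0 k) (mul_nonneg (hγ0 k) (hε0 k)))
        · exact mul_nonneg (hp k) (mul_nonneg (hβ0 k) (mul_nonneg (hδ0 k) (hζ0 k)))
        · exact mul_nonneg (hp k) (mul_nonneg (norm_nonneg _)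
            (mul_nonneg (norm_nonneg _) (norm_nonneg _)))
        · exact SepAux.per_k (hp k) (hα0 k) (hβ0 k) (hγ0 k) (hδ0 k) (hε0 k) (hζ0 k)
            (hCSa k) (hCSb k) (hCSc k)
    _ = _ := by rw [hT1, hT2, hT3, hT4]; ring
end
end

section
/- Let ρ be a fully separable tripartite density matrix on ℂ^{dA}⊗ℂ^{dB}⊗ℂ^{dC}, and let A₁, A₂ (dA×dA), B₁, B₂ (dB×dB), C₁, C₂ (dC×dC) be complex matrices. Then |Tr((A₁A₂ ⊗ B₁B₂ ⊗ C₁C₂)ρ)|⁶ ≤ Re Tr((A₂†A₂ ⊗ B₂†B₂ ⊗ C₁C₁†)ρ) · Re Tr((A₂†A₂ ⊗ B₁B₁† ⊗ C₂†C₂)ρ) · Re Tr((A₁A₁† ⊗ B₂†B₂ ⊗ C₁C₁†)ρ) · Re Tr((A₁A₁† ⊗ B₂†B₂ ⊗ C₂†C₂)ρ) · Re Tr((A₂†A₂ ⊗ B₁B₁† ⊗ C₁C₁†)ρ) · Re Tr((A₁A₁† ⊗ B₁B₁† ⊗ C₂†C₂)ρ). -/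
open Matrix
open scoped Kronecker ComplexOrder

noncomputable section

private lemma holder_aux {n m : ℕ} (hm : m ≠ 0) (p u : Fin n → ℝ) (T : Fin m → Fin n → ℝ)
    (hp : ∀ k, 0 ≤ p k) (hu : ∀ k, 0 ≤ u k) (hT : ∀ i k, 0 ≤ T i k)
    (hub : ∀ k, u k ^ m ≤ ∏ i, T i k) :
    (∑ k, p k * u k) ^ m ≤ ∏ i, ∑ k, p k * T i k := by
  set S : Fin m → ℝ := fun i => ∑ k, p k * T i k with hS
  have hS0 : ∀ i, 0 ≤ S i := fun i => Finset.sum_nonneg fun k _ => mul_nonneg (hp k) (hT i k)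
  by_cases hz : ∃ i, S i = 0
  · obtain ⟨i, hi⟩ := hz
    have hterm : ∀ k, p k * u k = 0 := by
      intro k
      have h0 : ∀ k' ∈ Finset.univ, 0 ≤ p k' * T i k' := fun k' _ => mul_nonneg (hp k') (hT i k')
      have h1 := (Finset.sum_eq_zero_iff_of_nonneg h0).mp hi k (Finset.mem_univ k)
      rcases mul_eq_zero.mp h1 with h | h
      · rw [h, zero_mul]
      · have hprod : ∏ j, T j k = 0 := Finset.prod_eq_zero (Finset.mem_univ i) h
        have h2 : u k ^ m ≤ 0 := hprod ▸ hub k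
        have hu0 : u k = 0 :=
          pow_eq_zero_iff hm |>.mp (le_antisymm h2 (pow_nonneg (hu k) m))
        rw [hu0, mul_zero]
    have hsum0 : (∑ k, p k * u k) = 0 := Finset.sum_eq_zero fun k _ => hterm k
    rw [hsum0, zero_pow hm]
    exact Finset.prod_nonneg fun j _ => hS0 j
  · push_neg at hz
    have hSpos : ∀ i, 0 < S i := fun i => (hS0 i).lt_of_ne (Ne.symm (hz i))
    have hminv : (0:ℝ) ≤ (m:ℝ)⁻¹ := by positivity
    have key : (∑ k, p k * u k) ≤ ∏ i, S i ^ ((m : ℝ)⁻¹) := by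
      have hsum1 : ∑ _i : Fin m, (m : ℝ)⁻¹ = 1 := by
        rw [Finset.sum_const, Finset.card_univ, Fintype.card_fin, nsmul_eq_mul,
          mul_inv_cancel₀ (by exact_mod_cast hm)]
      have inner : ∀ i, ∑ k, p k * ((m:ℝ)⁻¹ * (T i k / S i)) = (m:ℝ)⁻¹ := by
        intro i
        have e1 : ∑ k, p k * ((m:ℝ)⁻¹ * (T i k / S i))
            = (m:ℝ)⁻¹ * ((∑ k, p k * T i k) / S i) := by
          rw [Finset.sum_div, Finset.mul_sum]
          exact Finset.sum_congr rfl fun k _ => by ring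
        have e2 : (∑ k, p k * T i k) = S i := rfl
        rw [e1, e2, div_self (hz i), mul_one]
      calc ∑ k, p k * u k
          ≤ ∑ k, p k * ((∏ i, S i ^ ((m:ℝ)⁻¹)) * ∑ i, (m:ℝ)⁻¹ * (T i k / S i)) := by
            refine Finset.sum_le_sum fun k _ => mul_le_mul_of_nonneg_left ?_ (hp k)
            have h1 : u k ≤ ∏ i, (T i k) ^ ((m:ℝ)⁻¹) := by
              have h := Real.rpow_le_rpow (pow_nonneg (hu k) m) (hub k) hminv
              rwa [Real.pow_rpow_inv_natCast (hu k) hm,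
                ← Real.finset_prod_rpow _ _ (fun i _ => hT i k) _] at h
            have h3 : ∏ i, (T i k) ^ ((m:ℝ)⁻¹)
                = (∏ i, S i ^ ((m:ℝ)⁻¹)) * ∏ i, (T i k / S i) ^ ((m:ℝ)⁻¹) := by
              rw [← Finset.prod_mul_distrib]
              refine Finset.prod_congr rfl fun i _ => ?_
              rw [← Real.mul_rpow (hS0 i) (div_nonneg (hT i k) (hS0 i))]
              congr 1
              rw [mul_comm, div_mul_cancel₀ _ (hz i)]
            have h4 : ∏ i, (T i k / S i) ^ ((m:ℝ)⁻¹) ≤ ∑ i, (m:ℝ)⁻¹ * (T i k / S i) :=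
              Real.geom_mean_le_arith_mean_weighted Finset.univ _ _
                (fun i _ => hminv) hsum1 (fun i _ => div_nonneg (hT i k) (hS0 i))
            calc u k ≤ ∏ i, (T i k) ^ ((m:ℝ)⁻¹) := h1
              _ = (∏ i, S i ^ ((m:ℝ)⁻¹)) * ∏ i, (T i k / S i) ^ ((m:ℝ)⁻¹) := h3
              _ ≤ (∏ i, S i ^ ((m:ℝ)⁻¹)) * ∑ i, (m:ℝ)⁻¹ * (T i k / S i) :=
                  mul_le_mul_of_nonneg_left h4
                    (Finset.prod_nonneg fun i _ => Real.rpow_nonneg (hS0 i) _)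
        _ = (∏ i, S i ^ ((m:ℝ)⁻¹)) * ∑ k, ∑ i, p k * ((m:ℝ)⁻¹ * (T i k / S i)) := by
            rw [Finset.mul_sum]
            refine Finset.sum_congr rfl fun k _ => ?_
            rw [show p k * ((∏ i, S i ^ ((m:ℝ)⁻¹)) * ∑ i, (m:ℝ)⁻¹ * (T i k / S i))
                = (∏ i, S i ^ ((m:ℝ)⁻¹)) * (p k * ∑ i, (m:ℝ)⁻¹ * (T i k / S i)) from by ring,
              Finset.mul_sum]
        _ = ∏ i, S i ^ ((m:ℝ)⁻¹) := by
            rw [Finset.sum_comm]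
            have : ∀ i ∈ Finset.univ, ∑ k, p k * ((m:ℝ)⁻¹ * (T i k / S i)) = (m:ℝ)⁻¹ :=
              fun i _ => inner i
            rw [Finset.sum_congr rfl this, hsum1, mul_one]
    calc (∑ k, p k * u k) ^ m ≤ (∏ i, S i ^ ((m:ℝ)⁻¹)) ^ m :=
          pow_le_pow_left₀ (Finset.sum_nonneg fun k _ => mul_nonneg (hp k) (hu k)) key m
      _ = ∏ i, (S i ^ ((m:ℝ)⁻¹)) ^ m := by rw [Finset.prod_pow]
      _ = ∏ i, S i := Finset.prod_congr rfl fun i _ => Real.rpow_inv_natCast_pow (hS0 i) hm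


private lemma trace_mul_double {d : ℕ} (A B : Matrix (Fin d) (Fin d) ℂ) :
    (A * B).trace = ∑ i, ∑ j, A i j * B j i := by
  simp [Matrix.trace, Matrix.mul_apply, Matrix.diag]

private lemma trace_fact {d : ℕ} (N X Y : Matrix (Fin d) (Fin d) ℂ) :
    (X * Y * (N * N)).trace = ((N * X) * (Y * N)).trace := by
  have h : (N * X) * (Y * N) = N * (X * Y * N) := by simp only [Matrix.mul_assoc]
  rw [h, Matrix.trace_mul_comm N, ← Matrix.mul_assoc]

private lemma trace_cross {d : ℕ} (N : Matrix (Fin d) (Fin d) ℂ) (hN : Nᴴ = N)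
    (X Y : Matrix (Fin d) (Fin d) ℂ) :
    (X * Y * (N * N)).trace = ∑ i, ∑ j, (N * X) i j * star ((N * Yᴴ) i j) := by
  rw [trace_fact, trace_mul_double]
  refine Finset.sum_congr rfl fun i _ => Finset.sum_congr rfl fun j _ => ?_
  congr 1
  have h : Y * N = (N * Yᴴ)ᴴ := by
    rw [conjTranspose_mul, conjTranspose_conjTranspose, hN]
  rw [h, conjTranspose_apply]

private lemma trace_self {d : ℕ} (N : Matrix (Fin d) (Fin d) ℂ) (hN : Nᴴ = N)
    (M : Matrix (Fin d) (Fin d) ℂ) :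
    (M * Mᴴ * (N * N)).trace = ∑ i, ∑ j, (Complex.normSq ((N * M) i j) : ℂ) := by
  rw [trace_cross N hN M Mᴴ]
  simp [conjTranspose_conjTranspose, Complex.mul_conj]

open scoped MatrixOrder Matrix.Norms.L2Operator in
private lemma trace_self_re {d : ℕ} {σ : Matrix (Fin d) (Fin d) ℂ} (hσ : σ.PosSemidef)
    (M : Matrix (Fin d) (Fin d) ℂ) :
    (M * Mᴴ * σ).trace = (((M * Mᴴ * σ).trace).re : ℂ) ∧ 0 ≤ ((M * Mᴴ * σ).trace).re := by
  classical
  have hNN : CFC.sqrt σ * CFC.sqrt σ = σ := CFC.sqrt_mul_sqrt_self σ hσ.nonneg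
  have hNH : (CFC.sqrt σ)ᴴ = CFC.sqrt σ := (CFC.sqrt_nonneg σ).posSemidef.1
  have h := trace_self (CFC.sqrt σ) hNH M
  rw [hNN] at h
  have hre : ((M * Mᴴ * σ).trace).re = ∑ i, ∑ j, Complex.normSq ((CFC.sqrt σ * M) i j) := by
    rw [h, Complex.re_sum]
    refine Finset.sum_congr rfl fun i _ => ?_
    rw [Complex.re_sum]
    simp
  constructor
  · rw [hre, h]
    push_cast
    rfl
  · rw [hre]
    exact Finset.sum_nonneg fun i _ => Finset.sum_nonneg fun j _ => Complex.normSq_nonneg _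

open scoped MatrixOrder Matrix.Norms.L2Operator in
private lemma cs_state {d : ℕ} {σ : Matrix (Fin d) (Fin d) ℂ} (hσ : σ.PosSemidef)
    (X Y : Matrix (Fin d) (Fin d) ℂ) :
    ‖(X * Y * σ).trace‖ ^ 2 ≤ ((X * Xᴴ * σ).trace).re * ((Yᴴ * Y * σ).trace).re := by
  classical
  set N := CFC.sqrt σ with hNdef
  have hNN : N * N = σ := CFC.sqrt_mul_sqrt_self σ hσ.nonneg
  have hNH : Nᴴ = N := (CFC.sqrt_nonneg σ).posSemidef.1
  have hcross : (X * Y * σ).trace = ∑ i, ∑ j, (N * X) i j * star ((N * Yᴴ) i j) := by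
    rw [← hNN]; exact trace_cross N hNH X Y
  have hre : ∀ M : Matrix (Fin d) (Fin d) ℂ,
      ((M * Mᴴ * σ).trace).re = ∑ i, ∑ j, Complex.normSq ((N * M) i j) := by
    intro M
    have h : (M * Mᴴ * σ).trace = ∑ i, ∑ j, (Complex.normSq ((N * M) i j) : ℂ) := by
      rw [← hNN]; exact trace_self N hNH M
    rw [h, Complex.re_sum]
    refine Finset.sum_congr rfl fun i _ => ?_
    rw [Complex.re_sum]
    simp
  have hx := hre X
  have hy' := hre Yᴴ
  rw [conjTranspose_conjTranspose] at hy'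
  have esum : ∀ g : Fin d → Fin d → ℝ, (∑ i, ∑ j, g i j) = ∑ q : Fin d × Fin d, g q.1 q.2 := by
    intro g
    rw [← Finset.sum_product', Finset.univ_product_univ]
  have habs : ‖(X * Y * σ).trace‖
      ≤ ∑ i, ∑ j, ‖(N * X) i j‖ * ‖(N * Yᴴ) i j‖ := by
    rw [hcross]
    refine (norm_sum_le _ _).trans (Finset.sum_le_sum fun i _ => ?_)
    refine (norm_sum_le _ _).trans (Finset.sum_le_sum fun j _ => ?_)
    exact le_of_eq (by rw [norm_mul, ← starRingEnd_apply, Complex.norm_conj])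
  calc ‖(X * Y * σ).trace‖ ^ 2
      ≤ (∑ q : Fin d × Fin d, ‖(N * X) q.1 q.2‖ * ‖(N * Yᴴ) q.1 q.2‖) ^ 2 := by
        exact pow_le_pow_left₀ (norm_nonneg _)
          (habs.trans_eq (esum fun i j =>
            ‖(N * X) i j‖ * ‖(N * Yᴴ) i j‖)) 2
    _ ≤ (∑ q : Fin d × Fin d, ‖(N * X) q.1 q.2‖ ^ 2) *
        ∑ q : Fin d × Fin d, ‖(N * Yᴴ) q.1 q.2‖ ^ 2 :=
        Finset.sum_mul_sq_le_sq_mul_sq _ _ _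
    _ = ((X * Xᴴ * σ).trace).re * ((Yᴴ * Y * σ).trace).re := by
        rw [hx, hy', esum fun i j => Complex.normSq ((N * X) i j),
          esum fun i j => Complex.normSq ((N * Yᴴ) i j)]
        simp [Complex.sq_norm]


private lemma trace_self_re' {d : ℕ} {σ : Matrix (Fin d) (Fin d) ℂ} (hσ : σ.PosSemidef)
    (M : Matrix (Fin d) (Fin d) ℂ) :
    (Mᴴ * M * σ).trace = (((Mᴴ * M * σ).trace).re : ℂ) ∧ 0 ≤ ((Mᴴ * M * σ).trace).re := by
  simpa using trace_self_re hσ Mᴴ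

set_option maxHeartbeats 1000000 in
/-- **The tripartite criterion Eq. (60).**  For every fully separable tripartite state,
`|⟨A₁A₂ ⊗ B₁B₂ ⊗ C₁C₂⟩|⁶` is bounded by the product of the six expectation values
`⟨A₂†A₂⊗B₂†B₂⊗C₁C₁†⟩ ⟨A₂†A₂⊗B₁B₁†⊗C₂†C₂⟩ ⟨A₁A₁†⊗B₂†B₂⊗C₁C₁†⟩
⟨A₁A₁†⊗B₂†B₂⊗C₂†C₂⟩ ⟨A₂†A₂⊗B₁B₁†⊗C₁C₁†⟩ ⟨A₁A₁†⊗B₁B₁†⊗C₂†C₂⟩`. -/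
theorem fully_separable_sixth_power_criterion {dA dB dC : ℕ}
    (ρ : Matrix (Fin dA × Fin dB × Fin dC) (Fin dA × Fin dB × Fin dC) ℂ)
    (hρ : IsDensityMatrix ρ) (hsep : FullySeparable ρ)
    (A₁ A₂ : Matrix (Fin dA) (Fin dA) ℂ) (B₁ B₂ : Matrix (Fin dB) (Fin dB) ℂ)
    (C₁ C₂ : Matrix (Fin dC) (Fin dC) ℂ) :
    ‖(((A₁ * A₂) ⊗ₖ ((B₁ * B₂) ⊗ₖ (C₁ * C₂))) * ρ).trace‖ ^ 6 ≤
      ((((A₂ᴴ * A₂) ⊗ₖ ((B₂ᴴ * B₂) ⊗ₖ (C₁ * C₁ᴴ))) * ρ).trace).re *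
      ((((A₂ᴴ * A₂) ⊗ₖ ((B₁ * B₁ᴴ) ⊗ₖ (C₂ᴴ * C₂))) * ρ).trace).re *
      ((((A₁ * A₁ᴴ) ⊗ₖ ((B₂ᴴ * B₂) ⊗ₖ (C₁ * C₁ᴴ))) * ρ).trace).re *
      ((((A₁ * A₁ᴴ) ⊗ₖ ((B₂ᴴ * B₂) ⊗ₖ (C₂ᴴ * C₂))) * ρ).trace).re *
      ((((A₂ᴴ * A₂) ⊗ₖ ((B₁ * B₁ᴴ) ⊗ₖ (C₁ * C₁ᴴ))) * ρ).trace).re *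
      ((((A₁ * A₁ᴴ) ⊗ₖ ((B₁ * B₁ᴴ) ⊗ₖ (C₂ᴴ * C₂))) * ρ).trace).re := by
  classical
  obtain ⟨n, p, ρA, ρB, ρC, hp, hpsum, hdA, hdB, hdC, hρeq⟩ := hsep
  have expand : ∀ (X : Matrix (Fin dA) (Fin dA) ℂ) (Y : Matrix (Fin dB) (Fin dB) ℂ)
      (Z : Matrix (Fin dC) (Fin dC) ℂ),
      ((X ⊗ₖ (Y ⊗ₖ Z)) * ρ).trace
        = ∑ k, (p k : ℂ) * ((X * ρA k).trace * ((Y * ρB k).trace * (Z * ρC k).trace)) := by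
    intro X Y Z
    rw [hρeq, Matrix.mul_sum, Matrix.trace_sum]
    refine Finset.sum_congr rfl fun k _ => ?_
    rw [Matrix.mul_smul, Matrix.trace_smul, smul_eq_mul]
    congr 1
    rw [← Matrix.mul_kronecker_mul, ← Matrix.mul_kronecker_mul,
      Matrix.trace_kronecker, Matrix.trace_kronecker]
  -- the six single-party real expectation values
  set aP : Fin n → ℝ := fun k => ((A₁ * A₁ᴴ * ρA k).trace).re with haP
  set aM : Fin n → ℝ := fun k => ((A₂ᴴ * A₂ * ρA k).trace).re with haM
  set bP : Fin n → ℝ := fun k => ((B₁ * B₁ᴴ * ρB k).trace).re with hbP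
  set bM : Fin n → ℝ := fun k => ((B₂ᴴ * B₂ * ρB k).trace).re with hbM
  set cP : Fin n → ℝ := fun k => ((C₁ * C₁ᴴ * ρC k).trace).re with hcP
  set cM : Fin n → ℝ := fun k => ((C₂ᴴ * C₂ * ρC k).trace).re with hcM
  have haPe : ∀ k, (A₁ * A₁ᴴ * ρA k).trace = (aP k : ℂ) := by
    intro k; rw [haP]; exact (trace_self_re (hdA k).1 A₁).1
  have haMe : ∀ k, (A₂ᴴ * A₂ * ρA k).trace = (aM k : ℂ) := by
    intro k; rw [haM]; exact (trace_self_re' (hdA k).1 A₂).1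
  have hbPe : ∀ k, (B₁ * B₁ᴴ * ρB k).trace = (bP k : ℂ) := by
    intro k; rw [hbP]; exact (trace_self_re (hdB k).1 B₁).1
  have hbMe : ∀ k, (B₂ᴴ * B₂ * ρB k).trace = (bM k : ℂ) := by
    intro k; rw [hbM]; exact (trace_self_re' (hdB k).1 B₂).1
  have hcPe : ∀ k, (C₁ * C₁ᴴ * ρC k).trace = (cP k : ℂ) := by
    intro k; rw [hcP]; exact (trace_self_re (hdC k).1 C₁).1
  have hcMe : ∀ k, (C₂ᴴ * C₂ * ρC k).trace = (cM k : ℂ) := by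
    intro k; rw [hcM]; exact (trace_self_re' (hdC k).1 C₂).1
  have haPn : ∀ k, 0 ≤ aP k := by intro k; rw [haP]; exact (trace_self_re (hdA k).1 A₁).2
  have haMn : ∀ k, 0 ≤ aM k := by intro k; rw [haM]; exact (trace_self_re' (hdA k).1 A₂).2
  have hbPn : ∀ k, 0 ≤ bP k := by intro k; rw [hbP]; exact (trace_self_re (hdB k).1 B₁).2
  have hbMn : ∀ k, 0 ≤ bM k := by intro k; rw [hbM]; exact (trace_self_re' (hdB k).1 B₂).2
  have hcPn : ∀ k, 0 ≤ cP k := by intro k; rw [hcP]; exact (trace_self_re (hdC k).1 C₁).2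
  have hcMn : ∀ k, 0 ≤ cM k := by intro k; rw [hcM]; exact (trace_self_re' (hdC k).1 C₂).2
  -- real part of each global expectation value is the weighted sum of products
  have hfac : ∀ (X : Matrix (Fin dA) (Fin dA) ℂ) (Y : Matrix (Fin dB) (Fin dB) ℂ)
      (Z : Matrix (Fin dC) (Fin dC) ℂ) (x y z : Fin n → ℝ),
      (∀ k, (X * ρA k).trace = (x k : ℂ)) → (∀ k, (Y * ρB k).trace = (y k : ℂ)) →
      (∀ k, (Z * ρC k).trace = (z k : ℂ)) →
      (((X ⊗ₖ (Y ⊗ₖ Z)) * ρ).trace).re = ∑ k, p k * (x k * (y k * z k)) := by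
    intro X Y Z x y z hx hy hz
    rw [expand, Complex.re_sum]
    refine Finset.sum_congr rfl fun k _ => ?_
    rw [hx, hy, hz, ← Complex.ofReal_mul, ← Complex.ofReal_mul, ← Complex.ofReal_mul,
      Complex.ofReal_re]
  -- the per-component absolute values
  set u : Fin n → ℝ := fun k => ‖(A₁ * A₂ * ρA k).trace‖ *
    (‖(B₁ * B₂ * ρB k).trace‖ * ‖(C₁ * C₂ * ρC k).trace‖) with hu_def
  have hun : ∀ k, 0 ≤ u k := fun k =>
    mul_nonneg (norm_nonneg _)
      (mul_nonneg (norm_nonneg _) (norm_nonneg _))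
  -- bound the absolute value of the LHS
  have hLb : ‖(((A₁ * A₂) ⊗ₖ ((B₁ * B₂) ⊗ₖ (C₁ * C₂))) * ρ).trace‖
      ≤ ∑ k, p k * u k := by
    rw [expand]
    refine (norm_sum_le _ _).trans (Finset.sum_le_sum fun k _ => le_of_eq ?_)
    rw [norm_mul, norm_mul, norm_mul, Complex.norm_real,
      Real.norm_of_nonneg (hp k), hu_def]
  -- the six product sequences
  set T : Fin 6 → Fin n → ℝ :=
    ![fun k => aM k * (bM k * cP k), fun k => aM k * (bP k * cM k),
      fun k => aP k * (bM k * cP k), fun k => aP k * (bM k * cM k),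
      fun k => aM k * (bP k * cP k), fun k => aP k * (bP k * cM k)] with hT_def
  have hTn : ∀ i k, 0 ≤ T i k := by
    intro i k
    fin_cases i <;>
      simp only [hT_def, Matrix.cons_val_zero, Matrix.cons_val_one, Matrix.head_cons,
        Matrix.cons_val_two, Matrix.tail_cons, Matrix.cons_val_three, Matrix.cons_val_four,
        Matrix.cons_val_succ, Fin.isValue] <;>
      first
      | exact mul_nonneg (haMn k) (mul_nonneg (hbMn k) (hcPn k))
      | exact mul_nonneg (haMn k) (mul_nonneg (hbPn k) (hcMn k))
      | exact mul_nonneg (haPn k) (mul_nonneg (hbMn k) (hcPn k))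
      | exact mul_nonneg (haPn k) (mul_nonneg (hbMn k) (hcMn k))
      | exact mul_nonneg (haMn k) (mul_nonneg (hbPn k) (hcPn k))
      | exact mul_nonneg (haPn k) (mul_nonneg (hbPn k) (hcMn k))
  have hub : ∀ k, u k ^ 6 ≤ ∏ i, T i k := by
    intro k
    have ha : ‖(A₁ * A₂ * ρA k).trace‖ ^ 2 ≤ aP k * aM k := by
      rw [haP, haM]; exact cs_state (hdA k).1 A₁ A₂
    have hb : ‖(B₁ * B₂ * ρB k).trace‖ ^ 2 ≤ bP k * bM k := by
      rw [hbP, hbM]; exact cs_state (hdB k).1 B₁ B₂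
    have hc : ‖(C₁ * C₂ * ρC k).trace‖ ^ 2 ≤ cP k * cM k := by
      rw [hcP, hcM]; exact cs_state (hdC k).1 C₁ C₂
    have habc : u k ^ 6 ≤ (aP k * aM k) ^ 3 * ((bP k * bM k) ^ 3 * (cP k * cM k) ^ 3) := by
      have e : u k ^ 6 = (‖(A₁ * A₂ * ρA k).trace‖ ^ 2) ^ 3 *
          ((‖(B₁ * B₂ * ρB k).trace‖ ^ 2) ^ 3 *
           (‖(C₁ * C₂ * ρC k).trace‖ ^ 2) ^ 3) := by
        rw [hu_def]; ring
      rw [e]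
      have h1 := pow_le_pow_left₀ (sq_nonneg _) ha 3
      have h2 := pow_le_pow_left₀ (sq_nonneg _) hb 3
      have h3 := pow_le_pow_left₀ (sq_nonneg _) hc 3
      exact mul_le_mul h1 (mul_le_mul h2 h3 (pow_nonneg (sq_nonneg _) 3)
          (pow_nonneg (mul_nonneg (hbPn k) (hbMn k)) 3))
        (mul_nonneg (pow_nonneg (sq_nonneg _) 3) (pow_nonneg (sq_nonneg _) 3))
        (pow_nonneg (mul_nonneg (haPn k) (haMn k)) 3)
    refine habc.trans_eq ?_
    simp only [hT_def, Fin.prod_univ_succ, Fin.prod_univ_zero, Matrix.cons_val_zero,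
      Matrix.cons_val_succ, mul_one]
    ring
  -- Hölder
  have hmain := holder_aux (by norm_num : (6:ℕ) ≠ 0) p u T hp hun hTn hub
  -- identify the six factors
  have h1 := hfac (A₂ᴴ * A₂) (B₂ᴴ * B₂) (C₁ * C₁ᴴ) aM bM cP haMe hbMe hcPe
  have h2 := hfac (A₂ᴴ * A₂) (B₁ * B₁ᴴ) (C₂ᴴ * C₂) aM bP cM haMe hbPe hcMe
  have h3 := hfac (A₁ * A₁ᴴ) (B₂ᴴ * B₂) (C₁ * C₁ᴴ) aP bM cP haPe hbMe hcPe
  have h4 := hfac (A₁ * A₁ᴴ) (B₂ᴴ * B₂) (C₂ᴴ * C₂) aP bM cM haPe hbMe hcMe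
  have h5 := hfac (A₂ᴴ * A₂) (B₁ * B₁ᴴ) (C₁ * C₁ᴴ) aM bP cP haMe hbPe hcPe
  have h6 := hfac (A₁ * A₁ᴴ) (B₁ * B₁ᴴ) (C₂ᴴ * C₂) aP bP cM haPe hbPe hcMe
  calc ‖(((A₁ * A₂) ⊗ₖ ((B₁ * B₂) ⊗ₖ (C₁ * C₂))) * ρ).trace‖ ^ 6
      ≤ (∑ k, p k * u k) ^ 6 := pow_le_pow_left₀ (norm_nonneg _) hLb 6
    _ ≤ ∏ i, ∑ k, p k * T i k := hmain
    _ = _ := by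
        simp only [hT_def, Fin.prod_univ_succ, Fin.prod_univ_zero, Matrix.cons_val_zero,
          Matrix.cons_val_succ, mul_one]
        rw [← h1, ← h2, ← h3, ← h4, ← h5, ← h6]
        ring
end
end

section
/- Let ρ be a separable bipartite density matrix on ℂ^{dA}⊗ℂ^{dB}, let A be a dA×dA complex matrix and B a dB×dB complex matrix. Then |Tr((A† ⊗ B)ρ)|² ≤ Re Tr((A†A ⊗ B†B)ρ). (This is the Hillery–Zubairy criterion, a special case of the Cauchy–Schwarz criterion with A₂ = 𝟙 and B₁ = 𝟙.) -/
open Matrix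
open scoped Kronecker ComplexOrder

noncomputable section

/-- Frobenius inner product as a Euclidean inner product. -/
lemma trace_eq_inner {ι : Type*} [Fintype ι] [DecidableEq ι] (M N : Matrix ι ι ℂ) :
    (Mᴴ * N).trace =
      inner ℂ ((EuclideanSpace.equiv (ι × ι) ℂ).symm fun p => M p.1 p.2)
        ((EuclideanSpace.equiv (ι × ι) ℂ).symm fun p => N p.1 p.2) := by
  simp only [PiLp.inner_apply, RCLike.inner_apply, Matrix.trace, Matrix.diag, Matrix.mul_apply,
    Matrix.conjTranspose_apply, EuclideanSpace.equiv, Fintype.sum_prod_type]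
  rw [Finset.sum_comm]
  exact Finset.sum_congr rfl fun _ _ => Finset.sum_congr rfl fun _ _ => mul_comm _ _

/-- Cauchy–Schwarz for the Frobenius inner product. -/
lemma csFrob {ι : Type*} [Fintype ι] [DecidableEq ι] (M N : Matrix ι ι ℂ) :
    ‖(Mᴴ * N).trace‖ ^ 2 ≤ ((Mᴴ * M).trace).re * ((Nᴴ * N).trace).re := by
  set x := (EuclideanSpace.equiv (ι × ι) ℂ).symm fun p => M p.1 p.2
  set y := (EuclideanSpace.equiv (ι × ι) ℂ).symm fun p => N p.1 p.2
  rw [trace_eq_inner M N, trace_eq_inner M M, trace_eq_inner N N]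
  have h := norm_inner_le_norm (𝕜 := ℂ) x y
  have hx : (inner ℂ x x).re = ‖x‖ ^ 2 := (norm_sq_eq_re_inner (𝕜 := ℂ) x).symm
  have hy : (inner ℂ y y).re = ‖y‖ ^ 2 := (norm_sq_eq_re_inner (𝕜 := ℂ) y).symm
  rw [hx, hy]
  calc ‖inner ℂ x y‖ ^ 2 = ‖inner ℂ x y‖ ^ 2 := rfl
    _ ≤ (‖x‖ * ‖y‖) ^ 2 := by
        have := pow_le_pow_left₀ (norm_nonneg _) h 2; simpa using this
    _ = ‖x‖ ^ 2 * ‖y‖ ^ 2 := by ring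

lemma trace_Mh_mul_self_re_nonneg {ι : Type*} [Fintype ι] [DecidableEq ι] (M : Matrix ι ι ℂ) :
    0 ≤ ((Mᴴ * M).trace).re := by
  rw [trace_eq_inner M M]
  exact inner_self_nonneg (𝕜 := ℂ)

lemma trace_Mh_mul_self_im {ι : Type*} [Fintype ι] [DecidableEq ι] (M : Matrix ι ι ℂ) :
    ((Mᴴ * M).trace).im = 0 := by
  rw [trace_eq_inner M M]
  exact inner_self_im (𝕜 := ℂ) _

lemma tr_sandwich {ι : Type*} [Fintype ι] (L X : Matrix ι ι ℂ) :
    (L * (X * Lᴴ)).trace = (X * (Lᴴ * L)).trace := by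
  rw [← Matrix.mul_assoc, Matrix.trace_mul_cycle, Matrix.trace_mul_comm]

open scoped MatrixOrder in
lemma posSemidef_exists_conjTranspose_mul_self {ι : Type*} [Fintype ι] [DecidableEq ι]
    {σ : Matrix ι ι ℂ} (h : σ.PosSemidef) : ∃ L : Matrix ι ι ℂ, σ = Lᴴ * L := by
  obtain ⟨L, hL⟩ := CStarAlgebra.nonneg_iff_eq_star_mul_self.mp h.nonneg
  exact ⟨L, hL⟩

/-- Per-state Cauchy–Schwarz, A-side. -/
lemma stateA {ι : Type*} [Fintype ι] [DecidableEq ι] {σ : Matrix ι ι ℂ}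
    (hσ : IsDensityMatrix σ) (A : Matrix ι ι ℂ) :
    ‖(Aᴴ * σ).trace‖ ^ 2 ≤ ((Aᴴ * A * σ).trace).re := by
  obtain ⟨hps, htr⟩ := hσ
  obtain ⟨L, rfl⟩ := posSemidef_exists_conjTranspose_mul_self hps
  have key := csFrob (A * Lᴴ) Lᴴ
  have e1 : ((A * Lᴴ)ᴴ * Lᴴ).trace = (Aᴴ * (Lᴴ * L)).trace := by
    rw [Matrix.conjTranspose_mul, Matrix.conjTranspose_conjTranspose, Matrix.mul_assoc,
      tr_sandwich]
  have e2 : ((A * Lᴴ)ᴴ * (A * Lᴴ)).trace = (Aᴴ * A * (Lᴴ * L)).trace := by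
    rw [Matrix.conjTranspose_mul, Matrix.conjTranspose_conjTranspose]
    have h : L * Aᴴ * (A * Lᴴ) = L * ((Aᴴ * A) * Lᴴ) := by simp only [Matrix.mul_assoc]
    rw [h, tr_sandwich]
  have e3 : (((Lᴴ)ᴴ) * Lᴴ).trace = 1 := by
    rw [Matrix.conjTranspose_conjTranspose, Matrix.trace_mul_comm]; exact htr
  rw [e1, e2, e3] at key
  simpa using key

/-- Per-state Cauchy–Schwarz, B-side. -/
lemma stateB {ι : Type*} [Fintype ι] [DecidableEq ι] {σ : Matrix ι ι ℂ}
    (hσ : IsDensityMatrix σ) (B : Matrix ι ι ℂ) :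
    ‖(B * σ).trace‖ ^ 2 ≤ ((Bᴴ * B * σ).trace).re := by
  obtain ⟨hps, htr⟩ := hσ
  obtain ⟨L, rfl⟩ := posSemidef_exists_conjTranspose_mul_self hps
  have key := csFrob Lᴴ (B * Lᴴ)
  have e1 : (((Lᴴ)ᴴ) * (B * Lᴴ)).trace = (B * (Lᴴ * L)).trace := by
    rw [Matrix.conjTranspose_conjTranspose, tr_sandwich]
  have e2 : ((B * Lᴴ)ᴴ * (B * Lᴴ)).trace = (Bᴴ * B * (Lᴴ * L)).trace := by
    rw [Matrix.conjTranspose_mul, Matrix.conjTranspose_conjTranspose]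
    have h : L * Bᴴ * (B * Lᴴ) = L * ((Bᴴ * B) * Lᴴ) := by simp only [Matrix.mul_assoc]
    rw [h, tr_sandwich]
  have e3 : (((Lᴴ)ᴴ) * Lᴴ).trace = 1 := by
    rw [Matrix.conjTranspose_conjTranspose, Matrix.trace_mul_comm]; exact htr
  rw [e1, e2, e3] at key
  simpa using key

lemma state_im {ι : Type*} [Fintype ι] [DecidableEq ι] {σ : Matrix ι ι ℂ}
    (hσ : IsDensityMatrix σ) (A : Matrix ι ι ℂ) :
    ((Aᴴ * A * σ).trace).im = 0 ∧ 0 ≤ ((Aᴴ * A * σ).trace).re := by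
  obtain ⟨hps, htr⟩ := hσ
  obtain ⟨L, rfl⟩ := posSemidef_exists_conjTranspose_mul_self hps
  have e2 : ((A * Lᴴ)ᴴ * (A * Lᴴ)).trace = (Aᴴ * A * (Lᴴ * L)).trace := by
    rw [Matrix.conjTranspose_mul, Matrix.conjTranspose_conjTranspose]
    have h : L * Aᴴ * (A * Lᴴ) = L * ((Aᴴ * A) * Lᴴ) := by simp only [Matrix.mul_assoc]
    rw [h, tr_sandwich]
  rw [← e2]
  exact ⟨trace_Mh_mul_self_im _, trace_Mh_mul_self_re_nonneg _⟩

/-- **The Hillery–Zubairy criterion (Eq. (46)).**  For every separable bipartite state,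
`|⟨A† ⊗ B⟩|² ≤ ⟨A†A ⊗ B†B⟩`. -/
theorem hillery_zubairy_criterion {dA dB : ℕ}
    (ρ : Matrix (Fin dA × Fin dB) (Fin dA × Fin dB) ℂ)
    (hρ : IsDensityMatrix ρ) (hsep : Separable ρ)
    (A : Matrix (Fin dA) (Fin dA) ℂ) (B : Matrix (Fin dB) (Fin dB) ℂ) :
    ‖((Aᴴ ⊗ₖ B) * ρ).trace‖ ^ 2 ≤
      ((((Aᴴ * A) ⊗ₖ (Bᴴ * B)) * ρ).trace).re := by
  obtain ⟨n, p, ρA, ρB, hp, hps, hdA, hdB, rfl⟩ := hsep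
  -- notation
  set a : Fin n → ℂ := fun k => ((Aᴴ * ρA k).trace) with ha
  set b : Fin n → ℂ := fun k => ((B * ρB k).trace) with hb
  set α : Fin n → ℝ := fun k => ((Aᴴ * A * ρA k).trace).re with hα
  set β : Fin n → ℝ := fun k => ((Bᴴ * B * ρB k).trace).re with hβ
  have hαim : ∀ k, ((Aᴴ * A * ρA k).trace).im = 0 := fun k => (state_im (hdA k) A).1
  have hβim : ∀ k, ((Bᴴ * B * ρB k).trace).im = 0 := fun k => (state_im (hdB k) B).1
  have hα0 : ∀ k, 0 ≤ α k := fun k => (state_im (hdA k) A).2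
  have hβ0 : ∀ k, 0 ≤ β k := fun k => (state_im (hdB k) B).2
  -- trace computations
  have hL : ((Aᴴ ⊗ₖ B) * ∑ k, (p k : ℂ) • (ρA k ⊗ₖ ρB k)).trace
      = ∑ k, (p k : ℂ) * (a k * b k) := by
    rw [Finset.mul_sum, Matrix.trace_sum]
    refine Finset.sum_congr rfl fun k _ => ?_
    rw [Matrix.mul_smul, Matrix.trace_smul, ← Matrix.mul_kronecker_mul,
      Matrix.trace_kronecker, smul_eq_mul]
  have hR : (((Aᴴ * A) ⊗ₖ (Bᴴ * B)) * ∑ k, (p k : ℂ) • (ρA k ⊗ₖ ρB k)).trace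
      = ∑ k, (p k : ℂ) * ((Aᴴ * A * ρA k).trace * (Bᴴ * B * ρB k).trace) := by
    rw [Finset.mul_sum, Matrix.trace_sum]
    refine Finset.sum_congr rfl fun k _ => ?_
    rw [Matrix.mul_smul, Matrix.trace_smul, ← Matrix.mul_kronecker_mul,
      Matrix.trace_kronecker, smul_eq_mul]
  rw [hL, hR]
  -- RHS is a real sum
  have hRre : (∑ k, (p k : ℂ) * ((Aᴴ * A * ρA k).trace * (Bᴴ * B * ρB k).trace)).re
      = ∑ k, p k * (α k * β k) := by
    rw [Complex.re_sum]
    refine Finset.sum_congr rfl fun k _ => ?_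
    rw [Complex.re_ofReal_mul, Complex.mul_re, hαim k, hβim k]
    simp [hα, hβ]
  rw [hRre]
  -- per-state Cauchy–Schwarz bounds
  have hcsa : ∀ k, ‖a k‖ ≤ Real.sqrt (α k) := by
    intro k
    have h := stateA (hdA k) A
    exact (Real.le_sqrt (norm_nonneg _) (hα0 k)).mpr h
  have hcsb : ∀ k, ‖b k‖ ≤ Real.sqrt (β k) := by
    intro k
    have h := stateB (hdB k) B
    exact (Real.le_sqrt (norm_nonneg _) (hβ0 k)).mpr h
  -- triangle inequality
  have step1 : ‖∑ k, (p k : ℂ) * (a k * b k)‖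
      ≤ ∑ k, p k * Real.sqrt (α k * β k) := by
    refine (norm_sum_le _ _).trans (Finset.sum_le_sum fun k _ => ?_)
    rw [norm_mul, norm_mul, Complex.norm_of_nonneg (hp k),
      Real.sqrt_mul (hα0 k)]
    exact mul_le_mul_of_nonneg_left
      (mul_le_mul (hcsa k) (hcsb k) (norm_nonneg _) (Real.sqrt_nonneg _)) (hp k)
  -- square and apply Cauchy–Schwarz on the sums
  have hnn : (0:ℝ) ≤ ∑ k, p k * Real.sqrt (α k * β k) :=
    Finset.sum_nonneg fun k _ => mul_nonneg (hp k) (Real.sqrt_nonneg _)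
  have step2 : (∑ k, p k * Real.sqrt (α k * β k)) ^ 2 ≤ ∑ k, p k * (α k * β k) := by
    have cs := Finset.sum_mul_sq_le_sq_mul_sq Finset.univ
      (fun k => Real.sqrt (p k)) (fun k => Real.sqrt (p k) * Real.sqrt (α k * β k))
    have e1 : ∀ k, Real.sqrt (p k) * (Real.sqrt (p k) * Real.sqrt (α k * β k))
        = p k * Real.sqrt (α k * β k) := by
      intro k
      rw [← mul_assoc, Real.mul_self_sqrt (hp k)]
    have e2 : ∀ k, Real.sqrt (p k) ^ 2 = p k := fun k => Real.sq_sqrt (hp k)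
    have e3 : ∀ k, (Real.sqrt (p k) * Real.sqrt (α k * β k)) ^ 2 = p k * (α k * β k) := by
      intro k
      rw [mul_pow, Real.sq_sqrt (hp k), Real.sq_sqrt (mul_nonneg (hα0 k) (hβ0 k))]
    simp only [e1, e2, e3] at cs
    simpa [hps] using cs
  calc ‖∑ k, (p k : ℂ) * (a k * b k)‖ ^ 2
      ≤ (∑ k, p k * Real.sqrt (α k * β k)) ^ 2 :=
        pow_le_pow_left₀ (norm_nonneg _) step1 2
    _ ≤ ∑ k, p k * (α k * β k) := step2
end
end

section
/- Let ρ be a fully separable three-qubit density matrix on ℂ²⊗ℂ²⊗ℂ², with entries indexed by the basis |000⟩,…,|111⟩. Then |ρ(000,111)|⁶ ≤ ρ(001,001)·ρ(010,010)·ρ(011,011)·ρ(100,100)·ρ(101,101)·ρ(110,110), where the diagonal entries on the right are nonnegative reals. -/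
open Matrix
open scoped Kronecker ComplexOrder

noncomputable section

lemma hoelder6 {n : ℕ} (m : Fin n → ℝ) (u : Fin 6 → Fin n → ℝ)
    (hm : ∀ k, 0 ≤ m k) (hu : ∀ j k, 0 ≤ u j k)
    (hmu : ∀ k, m k ^ 6 ≤ ∏ j, u j k) :
    (∑ k, m k) ^ 6 ≤ ∏ j, ∑ k, u j k := by
  set S : Fin 6 → ℝ := fun j => ∑ k, u j k with hS
  have hSnn : ∀ j, 0 ≤ S j := fun j => Finset.sum_nonneg fun k _ => hu j k
  by_cases hz : ∃ j, S j = 0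
  · obtain ⟨j0, hj0⟩ := hz
    have huz : ∀ k, u j0 k = 0 := by
      intro k
      have := (Finset.sum_eq_zero_iff_of_nonneg (fun k _ => hu j0 k)).mp hj0
      exact this k (Finset.mem_univ k)
    have hmz : ∀ k, m k = 0 := by
      intro k
      have h1 : m k ^ 6 ≤ 0 := by
        refine (hmu k).trans (le_of_eq ?_)
        exact Finset.prod_eq_zero (Finset.mem_univ j0) (huz k)
      exact pow_eq_zero_iff (n := 6) (by norm_num) |>.mp
        (le_antisymm h1 (pow_nonneg (hm k) 6))
    have hms : (∑ k, m k) = 0 := Finset.sum_eq_zero fun k _ => hmz k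
    rw [hms, zero_pow (by norm_num : (6:ℕ) ≠ 0)]
    exact Finset.prod_nonneg fun j _ => hSnn j
  · push_neg at hz
    have hSpos : ∀ j, 0 < S j := fun j => lt_of_le_of_ne (hSnn j) (Ne.symm (hz j))
    -- main bound: ∑ m ≤ ∏ j, (S j) ^ (1/6 : ℝ)
    have main : (∑ k, m k) ≤ ∏ j, (S j) ^ ((6:ℝ)⁻¹) := by
      have step : ∀ k, m k ≤ (∏ j, (S j) ^ ((6:ℝ)⁻¹)) * ((6:ℝ)⁻¹ * ∑ j, u j k / S j) := by
        intro k
        have h1 : m k ≤ (∏ j, u j k) ^ ((6:ℝ)⁻¹) := by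
          have := Real.rpow_le_rpow (pow_nonneg (hm k) 6) (hmu k) (by norm_num : (0:ℝ) ≤ (6:ℝ)⁻¹)
          rwa [← Real.rpow_natCast (m k) 6, ← Real.rpow_mul (hm k), show ((6:ℕ):ℝ) * (6:ℝ)⁻¹ = 1 by norm_num,
            Real.rpow_one] at this
        have h2 : (∏ j, u j k) ^ ((6:ℝ)⁻¹) = ∏ j, (u j k) ^ ((6:ℝ)⁻¹) := by
          rw [← Real.finset_prod_rpow _ _ (fun j _ => hu j k)]
        have h3 : ∀ j, (u j k) ^ ((6:ℝ)⁻¹) = (S j) ^ ((6:ℝ)⁻¹) * (u j k / S j) ^ ((6:ℝ)⁻¹) := by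
          intro j
          rw [← Real.mul_rpow (hSnn j) (div_nonneg (hu j k) (hSnn j)), mul_div_cancel₀ _ (hz j)]
        have h4 : ∏ j, (u j k) ^ ((6:ℝ)⁻¹)
            = (∏ j, (S j) ^ ((6:ℝ)⁻¹)) * ∏ j, (u j k / S j) ^ ((6:ℝ)⁻¹) := by
          rw [← Finset.prod_mul_distrib]
          exact Finset.prod_congr rfl fun j _ => h3 j
        have h5 : ∏ j, (u j k / S j) ^ ((6:ℝ)⁻¹) ≤ ∑ j, (6:ℝ)⁻¹ * (u j k / S j) := by
          exact Real.geom_mean_le_arith_mean_weighted Finset.univ (fun _ => (6:ℝ)⁻¹)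
            (fun j => u j k / S j) (fun j _ => by norm_num)
            (by simp) (fun j _ => div_nonneg (hu j k) (hSnn j))
        calc m k ≤ (∏ j, u j k) ^ ((6:ℝ)⁻¹) := h1
          _ = (∏ j, (S j) ^ ((6:ℝ)⁻¹)) * ∏ j, (u j k / S j) ^ ((6:ℝ)⁻¹) := by rw [h2, h4]
          _ ≤ (∏ j, (S j) ^ ((6:ℝ)⁻¹)) * ∑ j, (6:ℝ)⁻¹ * (u j k / S j) := by
              exact mul_le_mul_of_nonneg_left h5 (Finset.prod_nonneg fun j _ =>
                Real.rpow_nonneg (hSnn j) _)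
          _ = (∏ j, (S j) ^ ((6:ℝ)⁻¹)) * ((6:ℝ)⁻¹ * ∑ j, u j k / S j) := by
              simp only [Finset.mul_sum]
      calc (∑ k, m k) ≤ ∑ k, (∏ j, (S j) ^ ((6:ℝ)⁻¹)) * ((6:ℝ)⁻¹ * ∑ j, u j k / S j) :=
            Finset.sum_le_sum fun k _ => step k
        _ = (∏ j, (S j) ^ ((6:ℝ)⁻¹)) * ((6:ℝ)⁻¹ * ∑ k, ∑ j, u j k / S j) := by
            simp only [Finset.mul_sum]
        _ = ∏ j, (S j) ^ ((6:ℝ)⁻¹) := by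
            rw [Finset.sum_comm]
            have : ∀ j : Fin 6, ∑ k, u j k / S j = 1 := by
              intro j
              rw [← Finset.sum_div, div_self (hz j)]
            simp [this]
    have h6 : (∑ k, m k) ^ 6 ≤ (∏ j, (S j) ^ ((6:ℝ)⁻¹)) ^ 6 := by
      refine pow_le_pow_left₀ (Finset.sum_nonneg fun k _ => hm k) main 6
    refine h6.trans (le_of_eq ?_)
    rw [← Finset.prod_pow]
    refine Finset.prod_congr rfl fun j _ => ?_
    rw [← Real.rpow_natCast ((S j) ^ ((6:ℝ)⁻¹)) 6, ← Real.rpow_mul (hSnn j)]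
    norm_num

lemma psd_diag_re_nonneg' {d : ℕ} {M : Matrix (Fin d) (Fin d) ℂ} (h : M.PosSemidef)
    (i : Fin d) : 0 ≤ (M i i).re := by
  have := h.re_dotProduct_nonneg (Pi.single i 1)
  simpa [dotProduct, Matrix.mulVec, Pi.single_apply, Finset.sum_ite_eq'] using this

lemma psd_diag_coe' {d : ℕ} {M : Matrix (Fin d) (Fin d) ℂ} (h : M.PosSemidef)
    (i : Fin d) : M i i = ((M i i).re : ℂ) := by
  have := h.1.coe_re_apply_self i
  simpa using this.symm

lemma psd_entry_sq' {M : Matrix (Fin 2) (Fin 2) ℂ} (h : M.PosSemidef) :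
    ‖M 0 1‖ ^ 2 ≤ (M 0 0).re * (M 1 1).re := by
  set a := (M 0 0).re with ha'
  set d := (M 1 1).re with hd'
  set b := M 0 1 with hb'
  have ha : 0 ≤ a := psd_diag_re_nonneg' h 0
  have hd : 0 ≤ d := psd_diag_re_nonneg' h 1
  have hM10 : M 1 0 = (starRingEnd ℂ) b := by
    have := congrFun (congrFun h.1 1) 0
    simpa [Matrix.conjTranspose_apply] using this.symm
  have key : ∀ t : ℝ, 0 ≤ a * (t * t) + (-(2 * ‖b‖ ^ 2)) * t
      + ‖b‖ ^ 2 * d := by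
    intro t
    have h0 := h.re_dotProduct_nonneg ![(t : ℂ), -(starRingEnd ℂ) b]
    have hQ : dotProduct (star ![(t : ℂ), -(starRingEnd ℂ) b])
        (M *ᵥ ![(t : ℂ), -(starRingEnd ℂ) b])
        = ((a * (t * t) + (-(2 * ‖b‖ ^ 2)) * t + ‖b‖ ^ 2 * d : ℝ) : ℂ) := by
      simp only [dotProduct, Matrix.mulVec, Fin.sum_univ_two, Pi.star_apply,
        Matrix.cons_val_zero, Matrix.cons_val_one, Matrix.head_cons]
      rw [hM10, psd_diag_coe' h 0, psd_diag_coe' h 1, ← ha', ← hd', ← hb']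
      have hbc : b * (starRingEnd ℂ) b = ((‖b‖ : ℝ) : ℂ) ^ 2 := by
        rw [Complex.mul_conj, Complex.normSq_eq_norm_sq]; push_cast; ring
      push_cast
      simp only [Complex.star_def, map_neg, Complex.conj_conj, Complex.conj_ofReal]
      linear_combination ((d : ℂ) - 2 * (t : ℂ)) * hbc
    rw [hQ] at h0
    simpa [← Complex.ofReal_pow] using h0
  have hdisc := discrim_le_zero key
  rw [discrim] at hdisc
  rcases eq_or_lt_of_le (norm_nonneg b) with hb0 | hb0
  · rw [← hb0]; simpa using mul_nonneg ha hd
  · nlinarith [mul_pos hb0 hb0]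


/-- **The matrix-entry criterion Eq. (58) of Gühne–Seevinck type.**
For every fully separable three-qubit state:
`|ρ_{000,111}|⁶ ≤ ρ_{001,001} ρ_{010,010} ρ_{011,011} ρ_{100,100} ρ_{101,101} ρ_{110,110}`. -/
theorem fully_separable_matrix_entry_criterion
    (ρ : Matrix (Fin 2 × Fin 2 × Fin 2) (Fin 2 × Fin 2 × Fin 2) ℂ)
    (hρ : IsDensityMatrix ρ) (hsep : FullySeparable ρ) :
    ‖ρ (0, 0, 0) (1, 1, 1)‖ ^ 6 ≤
      (ρ (0, 0, 1) (0, 0, 1)).re * (ρ (0, 1, 0) (0, 1, 0)).re *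
      (ρ (0, 1, 1) (0, 1, 1)).re * (ρ (1, 0, 0) (1, 0, 0)).re *
      (ρ (1, 0, 1) (1, 0, 1)).re * (ρ (1, 1, 0) (1, 1, 0)).re := by
  obtain ⟨n, p, A, B, C, hp, hp1, hA, hB, hC, hρeq⟩ := hsep
  have entry : ∀ x y : Fin 2 × Fin 2 × Fin 2,
      ρ x y = ∑ k, (p k : ℂ) * (A k x.1 y.1 * (B k x.2.1 y.2.1 * C k x.2.2 y.2.2)) := by
    intro x y
    rw [hρeq]
    simp [Matrix.sum_apply, Matrix.kroneckerMap_apply]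
  have diag : ∀ (i j l : Fin 2),
      (ρ (i, j, l) (i, j, l)).re
        = ∑ k, p k * ((A k i i).re * ((B k j j).re * (C k l l).re)) := by
    intro i j l
    rw [entry (i, j, l) (i, j, l), Complex.re_sum]
    refine Finset.sum_congr rfl fun k _ => ?_
    rw [psd_diag_coe' (hA k).1 i, psd_diag_coe' (hB k).1 j, psd_diag_coe' (hC k).1 l]
    simp [← Complex.ofReal_mul]
  have ha0 : ∀ k, 0 ≤ (A k 0 0).re := fun k => psd_diag_re_nonneg' (hA k).1 0
  have ha1 : ∀ k, 0 ≤ (A k 1 1).re := fun k => psd_diag_re_nonneg' (hA k).1 1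
  have hb0 : ∀ k, 0 ≤ (B k 0 0).re := fun k => psd_diag_re_nonneg' (hB k).1 0
  have hb1 : ∀ k, 0 ≤ (B k 1 1).re := fun k => psd_diag_re_nonneg' (hB k).1 1
  have hc0 : ∀ k, 0 ≤ (C k 0 0).re := fun k => psd_diag_re_nonneg' (hC k).1 0
  have hc1 : ∀ k, 0 ≤ (C k 1 1).re := fun k => psd_diag_re_nonneg' (hC k).1 1
  set m : Fin n → ℝ := fun k =>
    p k * (‖A k 0 1‖ * (‖B k 0 1‖ * ‖C k 0 1‖)) with hm'
  set u : Fin 6 → Fin n → ℝ :=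
    ![fun k => p k * ((A k 0 0).re * ((B k 0 0).re * (C k 1 1).re)),
      fun k => p k * ((A k 0 0).re * ((B k 1 1).re * (C k 0 0).re)),
      fun k => p k * ((A k 0 0).re * ((B k 1 1).re * (C k 1 1).re)),
      fun k => p k * ((A k 1 1).re * ((B k 0 0).re * (C k 0 0).re)),
      fun k => p k * ((A k 1 1).re * ((B k 0 0).re * (C k 1 1).re)),
      fun k => p k * ((A k 1 1).re * ((B k 1 1).re * (C k 0 0).re))] with hu'
  have hmnn : ∀ k, 0 ≤ m k := fun k => by
    have h1 := norm_nonneg (A k 0 1)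
    have h2 := norm_nonneg (B k 0 1)
    have h3 := norm_nonneg (C k 0 1)
    exact mul_nonneg (hp k) (mul_nonneg h1 (mul_nonneg h2 h3))
  have hunn : ∀ j k, 0 ≤ u j k := by
    intro j k
    fin_cases j <;>
      simp only [hu', Matrix.cons_val_zero, Matrix.cons_val_one, Matrix.head_cons,
        Matrix.cons_val', Matrix.empty_val', Matrix.cons_val_fin_one]
    · exact mul_nonneg (hp k) (mul_nonneg (ha0 k) (mul_nonneg (hb0 k) (hc1 k)))
    · exact mul_nonneg (hp k) (mul_nonneg (ha0 k) (mul_nonneg (hb1 k) (hc0 k)))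
    · exact mul_nonneg (hp k) (mul_nonneg (ha0 k) (mul_nonneg (hb1 k) (hc1 k)))
    · exact mul_nonneg (hp k) (mul_nonneg (ha1 k) (mul_nonneg (hb0 k) (hc0 k)))
    · exact mul_nonneg (hp k) (mul_nonneg (ha1 k) (mul_nonneg (hb0 k) (hc1 k)))
    · exact mul_nonneg (hp k) (mul_nonneg (ha1 k) (mul_nonneg (hb1 k) (hc0 k)))
  have habs : ‖ρ (0, 0, 0) (1, 1, 1)‖ ≤ ∑ k, m k := by
    rw [entry (0, 0, 0) (1, 1, 1)]
    refine (norm_sum_le _ _).trans (le_of_eq (Finset.sum_congr rfl fun k _ => ?_))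
    simp only [hm', norm_mul, Complex.norm_real, Real.norm_eq_abs, abs_of_nonneg (hp k)]
  have hprod : ∀ k, m k ^ 6 ≤ ∏ j, u j k := by
    intro k
    have eA := psd_entry_sq' (hA k).1
    have eB := psd_entry_sq' (hB k).1
    have eC := psd_entry_sq' (hC k).1
    have hexp : ∏ j, u j k
        = p k ^ 6 * (((A k 0 0).re * (A k 1 1).re) ^ 3 *
            (((B k 0 0).re * (B k 1 1).re) ^ 3 * ((C k 0 0).re * (C k 1 1).re) ^ 3)) := by
      rw [Fin.prod_univ_six]
      show (p k * ((A k 0 0).re * ((B k 0 0).re * (C k 1 1).re)))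
          * (p k * ((A k 0 0).re * ((B k 1 1).re * (C k 0 0).re)))
          * (p k * ((A k 0 0).re * ((B k 1 1).re * (C k 1 1).re)))
          * (p k * ((A k 1 1).re * ((B k 0 0).re * (C k 0 0).re)))
          * (p k * ((A k 1 1).re * ((B k 0 0).re * (C k 1 1).re)))
          * (p k * ((A k 1 1).re * ((B k 1 1).re * (C k 0 0).re))) = _
      ring
    rw [hexp]
    have hstep : m k ^ 6 = p k ^ 6 * ((‖A k 0 1‖ ^ 2) ^ 3 *
        ((‖B k 0 1‖ ^ 2) ^ 3 * (‖C k 0 1‖ ^ 2) ^ 3)) := by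
      simp only [hm']; ring
    rw [hstep]
    have tA : (‖A k 0 1‖ ^ 2) ^ 3 ≤ ((A k 0 0).re * (A k 1 1).re) ^ 3 :=
      pow_le_pow_left₀ (by positivity) eA 3
    have tB : (‖B k 0 1‖ ^ 2) ^ 3 ≤ ((B k 0 0).re * (B k 1 1).re) ^ 3 :=
      pow_le_pow_left₀ (by positivity) eB 3
    have tC : (‖C k 0 1‖ ^ 2) ^ 3 ≤ ((C k 0 0).re * (C k 1 1).re) ^ 3 :=
      pow_le_pow_left₀ (by positivity) eC 3
    have h1 : (‖B k 0 1‖ ^ 2) ^ 3 * (‖C k 0 1‖ ^ 2) ^ 3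
        ≤ ((B k 0 0).re * (B k 1 1).re) ^ 3 * ((C k 0 0).re * (C k 1 1).re) ^ 3 :=
      mul_le_mul tB tC (by positivity) (le_trans (by positivity) tB)
    have h2 : (‖A k 0 1‖ ^ 2) ^ 3
          * ((‖B k 0 1‖ ^ 2) ^ 3 * (‖C k 0 1‖ ^ 2) ^ 3)
        ≤ ((A k 0 0).re * (A k 1 1).re) ^ 3
          * (((B k 0 0).re * (B k 1 1).re) ^ 3 * ((C k 0 0).re * (C k 1 1).re) ^ 3) :=
      mul_le_mul tA h1 (by positivity) (le_trans (by positivity) tA)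
    exact mul_le_mul_of_nonneg_left h2 (pow_nonneg (hp k) 6)
  have hoel := hoelder6 m u hmnn hunn hprod
  have hLHS : ‖ρ (0, 0, 0) (1, 1, 1)‖ ^ 6 ≤ (∑ k, m k) ^ 6 :=
    pow_le_pow_left₀ (norm_nonneg _) habs 6
  refine hLHS.trans (hoel.trans (le_of_eq ?_))
  rw [Fin.prod_univ_six, diag 0 0 1, diag 0 1 0, diag 0 1 1, diag 1 0 0, diag 1 0 1, diag 1 1 0]
  rfl
end
end
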